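/- arXiv:2504.21492 — 6 statements merged into one kernel-verified Lean document; each statement's English description precedes it below -/
import Mathlib

section
/- Let n ≥ 1 and let φ : ℝ^n → ℝ be continuous. Let v₁ : ℝ^{n+1} → ℝ be a global solution to the thin obstacle problem with obstacle φ, and let v₂ : ℝ^{n+1} → ℝ be a continuous function satisfying: v₂(x', x_{n+1}) = v₂(x', −x_{n+1}) for all x; v₂(x', 0) ≥ φ(x') for all x' ∈ ℝ^n; and for every x ∈ ℝ^{n+1} and r > 0, v₂(x) is greater than or equal to the average of v₂ over the ball B_r(x) with respect to Lebesgue measure. If liminf_{|x| → ∞} (v₂ − v₁)(x) ≥ 0, then v₂ ≥ v₁ in all of ℝ^{n+1}. -/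
open MeasureTheory Metric Set Filter

noncomputable section

/-- The point `(x', t)` of `ℝ^{n+1}`, where `x' ∈ ℝ^n`. -/
def thinEmbed (n : ℕ) (x' : EuclideanSpace ℝ (Fin n)) (t : ℝ) :
    EuclideanSpace ℝ (Fin (n + 1)) :=
  (EuclideanSpace.equiv (Fin (n + 1)) ℝ).symm (Fin.snoc (fun i => x' i) t)

/-- Projection of a point of `ℝ^{n+1}` to its first `n` coordinates. -/
def thinProj (n : ℕ) (x : EuclideanSpace ℝ (Fin (n + 1))) : EuclideanSpace ℝ (Fin n) :=
  (EuclideanSpace.equiv (Fin n) ℝ).symm (fun i => x i.castSucc)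

/-- The Laplacian of `f : ℝ^d → ℝ`: the sum of pure second partial derivatives. -/
def lapl (d : ℕ) (f : EuclideanSpace ℝ (Fin d) → ℝ) (x : EuclideanSpace ℝ (Fin d)) : ℝ :=
  ∑ i : Fin d,
    fderiv ℝ (fun y => fderiv ℝ f y (EuclideanSpace.single i 1)) x (EuclideanSpace.single i 1)

/-- `f` is harmonic on a set: twice continuously differentiable with vanishing Laplacian. -/
def IsHarmonicOnSet (d : ℕ) (f : EuclideanSpace ℝ (Fin d) → ℝ)
    (s : Set (EuclideanSpace ℝ (Fin d))) : Prop :=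
  ContDiffOn ℝ 2 f s ∧ ∀ x ∈ s, lapl d f x = 0

/-- Super-mean-value property w.r.t. averages over balls
(encodes `Δf ≤ 0` for continuous `f`). -/
def SuperMeanVal (d : ℕ) (f : EuclideanSpace ℝ (Fin d) → ℝ) : Prop :=
  ∀ (x : EuclideanSpace ℝ (Fin d)) (r : ℝ), 0 < r → (⨍ y in Metric.ball x r, f y) ≤ f x

/-- The contact set `Λ_φ(u) = {(x',0) : u(x',0) = φ(x')}`. -/
def contactSet (n : ℕ) (φ : EuclideanSpace ℝ (Fin n) → ℝ)
    (u : EuclideanSpace ℝ (Fin (n + 1)) → ℝ) : Set (EuclideanSpace ℝ (Fin (n + 1))) :=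
  {x | x (Fin.last n) = 0 ∧ u x = φ (thinProj n x)}

/-- Global solution to the thin obstacle problem in `ℝ^{n+1}` with thin obstacle `φ`:
continuous, even in the last variable, above the obstacle on the thin space,
harmonic outside the contact set, and superharmonic (mean value inequality). -/
def IsGlobalSolution (n : ℕ) (φ : EuclideanSpace ℝ (Fin n) → ℝ)
    (u : EuclideanSpace ℝ (Fin (n + 1)) → ℝ) : Prop :=
  Continuous u ∧
  (∀ x' t, u (thinEmbed n x' t) = u (thinEmbed n x' (-t))) ∧
  (∀ x', φ x' ≤ u (thinEmbed n x' 0)) ∧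
  IsHarmonicOnSet (n + 1) u (contactSet n φ u)ᶜ ∧
  SuperMeanVal (n + 1) u

namespace St2
variable {d : ℕ}

lemma norm_sq_eq (x : EuclideanSpace ℝ (Fin d)) : ‖x‖^2 = ∑ i, (x i)^2 := by
  rw [EuclideanSpace.norm_eq, Real.sq_sqrt (by positivity)]
  simp [Real.norm_eq_abs, sq_abs]

/-- Negation of the `i`-th coordinate, as a linear equiv. -/
def negEquiv (d : ℕ) (i : Fin d) :
    EuclideanSpace ℝ (Fin d) ≃ₗ[ℝ] EuclideanSpace ℝ (Fin d) :=
  { toFun := fun x => (EuclideanSpace.equiv (Fin d) ℝ).symm fun j => if j = i then -(x j) else x j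
    invFun := fun x => (EuclideanSpace.equiv (Fin d) ℝ).symm fun j => if j = i then -(x j) else x j
    map_add' := by
      intro x y; ext j
      by_cases h : j = i
      · subst h; simp; ring
      · simp [h]
    map_smul' := by
      intro c x; ext j
      by_cases h : j = i
      · subst h; simp
      · simp [h]
    left_inv := by
      intro x; ext j
      by_cases h : j = i
      · subst h; simp
      · simp [h]
    right_inv := by
      intro x; ext j
      by_cases h : j = i
      · subst h; simp
      · simp [h] }

lemma negEquiv_apply (i j : Fin d) (x : EuclideanSpace ℝ (Fin d)) :
    negEquiv d i x j = if j = i then -(x j) else x j := rfl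

/-- Negation of the `i`-th coordinate, as a linear isometry equiv. -/
def negIso (d : ℕ) (i : Fin d) :
    EuclideanSpace ℝ (Fin d) ≃ₗᵢ[ℝ] EuclideanSpace ℝ (Fin d) where
  toLinearEquiv := negEquiv d i
  norm_map' := by
    intro x
    have hn : ∀ y : EuclideanSpace ℝ (Fin d), ‖y‖ = Real.sqrt (∑ j, (y j)^2) := by
      intro y; rw [EuclideanSpace.norm_eq]; simp [Real.norm_eq_abs, sq_abs]
    rw [show ‖(negEquiv d i) x‖ = Real.sqrt (∑ j, ((negEquiv d i x) j)^2) from hn _, hn x]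
    congr 1
    refine Finset.sum_congr rfl fun j _ => ?_
    rw [negEquiv_apply]
    by_cases h : j = i
    · subst h; simp
    · simp [h]

lemma negIso_apply (i j : Fin d) (x : EuclideanSpace ℝ (Fin d)) :
    negIso d i x j = if j = i then -(x j) else x j := rfl

/-- Swap of two coordinates as a linear isometry equiv. -/
def swapIso (d : ℕ) (i j : Fin d) :
    EuclideanSpace ℝ (Fin d) ≃ₗᵢ[ℝ] EuclideanSpace ℝ (Fin d) :=
  LinearIsometryEquiv.piLpCongrLeft 2 ℝ ℝ (Equiv.swap i j)

lemma swapIso_apply (i j k : Fin d) (x : EuclideanSpace ℝ (Fin d)) :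
    swapIso d i j x k = x (Equiv.swap i j k) := by
  rw [swapIso, LinearIsometryEquiv.piLpCongrLeft_apply]
  simp [Equiv.piCongrLeft'_apply, Equiv.symm_swap]

/-- change of variables under a linear isometry fixing balls at 0. -/
lemma setIntegral_ball_comp_iso (e : EuclideanSpace ℝ (Fin d) ≃ₗᵢ[ℝ] EuclideanSpace ℝ (Fin d))
    (g : EuclideanSpace ℝ (Fin d) → ℝ) (r : ℝ) :
    ∫ z in ball (0 : EuclideanSpace ℝ (Fin d)) r, g (e z) = ∫ z in ball 0 r, g z := by
  have him : e '' ball 0 r = ball 0 r := by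
    rw [← e.coe_toIsometryEquiv, e.toIsometryEquiv.image_ball]; simp
  conv_rhs => rw [← him]
  rw [e.measurePreserving.setIntegral_image_emb e.toHomeomorph.measurableEmbedding]

lemma setIntegral_ball_translate (y : EuclideanSpace ℝ (Fin d)) (r : ℝ)
    (g : EuclideanSpace ℝ (Fin d) → ℝ) :
    ∫ x in ball y r, g x = ∫ z in ball 0 r, g (y + z) := by
  have h : MeasurePreserving (fun z : EuclideanSpace ℝ (Fin d) => y + z) volume volume :=
    measurePreserving_add_left volume y
  have he : MeasurableEmbedding (fun z : EuclideanSpace ℝ (Fin d) => y + z) :=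
    (MeasurableEquiv.addLeft y).measurableEmbedding
  have him : (fun z : EuclideanSpace ℝ (Fin d) => y + z) '' ball 0 r = ball y r := by
    ext x
    constructor
    · rintro ⟨z, hz, rfl⟩
      simp only [mem_ball, dist_eq_norm] at hz ⊢
      simpa using hz
    · intro hx
      refine ⟨x - y, ?_, by simp⟩
      simp only [mem_ball, dist_eq_norm] at hx ⊢
      simpa using hx
  rw [← him, h.setIntegral_image_emb he]

lemma setIntegral_ball_neg (r : ℝ) (g : EuclideanSpace ℝ (Fin d) → ℝ) :
    ∫ z in ball (0 : EuclideanSpace ℝ (Fin d)) r, g (-z) = ∫ z in ball 0 r, g z :=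
  setIntegral_ball_comp_iso (LinearIsometryEquiv.neg ℝ) g r


lemma integrableOn_ball_of_continuous {f : EuclideanSpace ℝ (Fin d) → ℝ}
    {y : EuclideanSpace ℝ (Fin d)} {r : ℝ} (hf : ContinuousOn f (closedBall y r)) :
    IntegrableOn f (ball y r) volume :=
  (hf.integrableOn_compact (isCompact_closedBall y r)).mono_set ball_subset_closedBall

lemma integrableOn_ball_of_continuous' {f : EuclideanSpace ℝ (Fin d) → ℝ}
    {y : EuclideanSpace ℝ (Fin d)} {r : ℝ} (hf : Continuous f) :
    IntegrableOn f (ball y r) volume :=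
  integrableOn_ball_of_continuous hf.continuousOn

/-- integral of an odd function over a centered ball vanishes -/
lemma setIntegral_ball_odd {g : EuclideanSpace ℝ (Fin d) → ℝ} (r : ℝ)
    (hodd : ∀ z, g (-z) = -g z) :
    ∫ z in ball (0 : EuclideanSpace ℝ (Fin d)) r, g z = 0 := by
  have h := setIntegral_ball_neg r g
  have h2 : ∫ z in ball (0 : EuclideanSpace ℝ (Fin d)) r, g (-z)
      = -∫ z in ball (0 : EuclideanSpace ℝ (Fin d)) r, g z := by
    simp_rw [hodd]
    exact integral_neg g
  linarith [h, h2]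

/-- off-diagonal coordinate products integrate to zero -/
lemma setIntegral_coord_mul {i j : Fin d} (hij : i ≠ j) (r : ℝ) :
    ∫ z in ball (0 : EuclideanSpace ℝ (Fin d)) r, (z i) * (z j) = 0 := by
  have h := setIntegral_ball_comp_iso (negIso d i) (fun z => (z i) * (z j)) r
  have h2 : ∀ z : EuclideanSpace ℝ (Fin d), ((negIso d i z) i) * ((negIso d i z) j)
      = -((z i) * (z j)) := by
    intro z
    rw [show negIso d i z i = -(z i) by rw [negIso]; simp [negEquiv_apply],
      show negIso d i z j = z j by rw [negIso]; simp [negEquiv_apply, hij.symm]]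
    ring
  simp_rw [h2] at h
  rw [integral_neg] at h
  linarith

/-- all diagonal coordinate squares have the same integral -/
lemma setIntegral_coord_sq_eq (i j : Fin d) (r : ℝ) :
    ∫ z in ball (0 : EuclideanSpace ℝ (Fin d)) r, (z i)^2
      = ∫ z in ball (0 : EuclideanSpace ℝ (Fin d)) r, (z j)^2 := by
  have h := setIntegral_ball_comp_iso (swapIso d i j) (fun z => (z i)^2) r
  have h2 : ∀ z : EuclideanSpace ℝ (Fin d), ((swapIso d i j z) i)^2 = (z j)^2 := by
    intro z; rw [swapIso_apply, Equiv.swap_apply_left]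
  simp_rw [h2] at h
  exact h.symm

lemma setIntegral_coord_sq (i : Fin d) (r : ℝ) :
    (d : ℝ) * ∫ z in ball (0 : EuclideanSpace ℝ (Fin d)) r, (z i)^2
      = ∫ z in ball (0 : EuclideanSpace ℝ (Fin d)) r, ‖z‖^2 := by
  have hsum : ∫ z in ball (0 : EuclideanSpace ℝ (Fin d)) r, ‖z‖^2
      = ∑ j : Fin d, ∫ z in ball (0 : EuclideanSpace ℝ (Fin d)) r, (z j)^2 := by
    simp_rw [norm_sq_eq]
    exact integral_finset_sum _ fun j _ => integrableOn_ball_of_continuous'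
      (((EuclideanSpace.proj j).continuous).pow 2)
  rw [hsum]
  rw [Finset.sum_congr rfl fun j _ => (setIntegral_coord_sq_eq j i r)]
  simp [mul_comm]

lemma euclid_sum_single (z : EuclideanSpace ℝ (Fin d)) :
    z = ∑ i, z i • EuclideanSpace.single i (1:ℝ) := by
  ext j
  rw [show (∑ i, z i • EuclideanSpace.single i (1:ℝ)) j
      = ∑ i, (z i • EuclideanSpace.single i (1:ℝ)) j from by
    simp [Pi.single_apply]]
  simp [EuclideanSpace.single_apply]

lemma bilin_expand (B : EuclideanSpace ℝ (Fin d) →L[ℝ] EuclideanSpace ℝ (Fin d) →L[ℝ] ℝ)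
    (z : EuclideanSpace ℝ (Fin d)) :
    B z z = ∑ i, ∑ j, z i * z j *
      B (EuclideanSpace.single i (1:ℝ)) (EuclideanSpace.single j (1:ℝ)) := by
  have hz : z = ∑ i, z i • EuclideanSpace.single i (1:ℝ) := euclid_sum_single z
  have h1 : B z = ∑ i, z i • B (EuclideanSpace.single i (1:ℝ)) := by
    conv_lhs => rw [hz]
    rw [map_sum]
    exact Finset.sum_congr rfl fun i _ => by rw [_root_.map_smul]
  rw [h1, ContinuousLinearMap.sum_apply]
  refine Finset.sum_congr rfl fun i _ => ?_
  rw [ContinuousLinearMap.smul_apply, smul_eq_mul]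
  have h2 : B (EuclideanSpace.single i (1:ℝ)) z
      = ∑ j, z j * B (EuclideanSpace.single i (1:ℝ)) (EuclideanSpace.single j (1:ℝ)) := by
    conv_lhs => rw [hz]
    rw [map_sum]
    exact Finset.sum_congr rfl fun j _ => by rw [_root_.map_smul, smul_eq_mul]
  rw [h2, Finset.mul_sum]
  exact Finset.sum_congr rfl fun j _ => by ring


lemma taylor_est {f : EuclideanSpace ℝ (Fin d) → ℝ} {U : Set (EuclideanSpace ℝ (Fin d))}
    (hU : IsOpen U) {y : EuclideanSpace ℝ (Fin d)} (hy : y ∈ U)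
    (hf : ContDiffOn ℝ 2 f U) {η : ℝ} (hη : 0 < η) :
    ∃ δ > 0, ball y δ ⊆ U ∧ ∀ z : EuclideanSpace ℝ (Fin d), ‖z‖ < δ →
      |f (y + z) - f y - fderiv ℝ f y z - (fderiv ℝ (fderiv ℝ f) y z z)/2| ≤ η * ‖z‖^2 := by
  have hfat : ContDiffAt ℝ 2 f y := hf.contDiffAt (hU.mem_nhds hy)
  have hg : ContDiffAt ℝ 1 (fderiv ℝ f) y := hfat.fderiv_right (by norm_num)
  set g := fderiv ℝ f with hgdef
  set B := fderiv ℝ g y with hBdef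
  have hB : HasFDerivAt g B y := (hg.differentiableAt one_ne_zero).hasFDerivAt
  have hlo := hasFDerivAt_iff_isLittleO_nhds_zero.1 hB
  have hev : ∀ᶠ h : EuclideanSpace ℝ (Fin d) in nhds 0,
      ‖g (y + h) - g y - B h‖ ≤ η * ‖h‖ := hlo.def hη
  rw [Metric.eventually_nhds_iff] at hev
  obtain ⟨δ₁, hδ₁, hev⟩ := hev
  obtain ⟨δ₂, hδ₂, hball⟩ := Metric.isOpen_iff.1 hU y hy
  refine ⟨min δ₁ δ₂, lt_min hδ₁ hδ₂, fun x hx => hball (ball_subset_ball (min_le_right _ _) hx),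
    fun z hz => ?_⟩
  have hzδ₁ : ‖z‖ < δ₁ := lt_of_lt_of_le hz (min_le_left _ _)
  have hzδ₂ : ‖z‖ < δ₂ := lt_of_lt_of_le hz (min_le_right _ _)
  -- membership of segment points in U
  have hmem : ∀ t : ℝ, t ∈ Icc (0:ℝ) 1 → y + t • z ∈ U := by
    intro t ht
    apply hball
    rw [mem_ball, dist_eq_norm]
    have : ‖y + t • z - y‖ = |t| * ‖z‖ := by rw [add_sub_cancel_left, norm_smul, Real.norm_eq_abs]
    rw [this, abs_of_nonneg ht.1]
    calc t * ‖z‖ ≤ 1 * ‖z‖ := by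
          apply mul_le_mul_of_nonneg_right ht.2 (norm_nonneg z)
      _ < δ₂ := by simpa using hzδ₂
  set φ : ℝ → ℝ := fun t => f (y + t • z) - t * (g y z) - t^2/2 * (B z z) with hφ
  set φ' : ℝ → ℝ := fun t => g (y + t • z) z - g y z - t * (B z z) with hφ'
  have hder : ∀ t ∈ Icc (0:ℝ) 1, HasDerivAt φ (φ' t) t := by
    intro t ht
    have hc : HasDerivAt (fun s : ℝ => y + s • z) z t := by
      simpa using ((hasDerivAt_id t).smul_const z).const_add y
    have hdf : HasFDerivAt f (g (y + t • z)) (y + t • z) :=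
      ((hf.differentiableOn (by norm_num)).differentiableAt
        (hU.mem_nhds (hmem t ht))).hasFDerivAt
    have h1 : HasDerivAt (fun s : ℝ => f (y + s • z)) (g (y + t • z) z) t :=
      hdf.comp_hasDerivAt t hc
    have h2 : HasDerivAt (fun s : ℝ => s * (g y z)) (g y z) t := by
      simpa using (hasDerivAt_id t).mul_const (g y z)
    have h3 : HasDerivAt (fun s : ℝ => s^2/2 * (B z z)) (t * (B z z)) t := by
      have := ((hasDerivAt_pow 2 t).div_const 2).mul_const (B z z)
      simpa [mul_comm] using this
    exact (h1.sub h2).sub h3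
  have hbound : ∀ t ∈ Ico (0:ℝ) 1, ‖φ' t‖ ≤ (η * ‖z‖^2) := by
    intro t ht
    have ht' : |t| < 1 ∨ t = 0 := by
      rcases eq_or_lt_of_le ht.1 with h | h
      · right; exact h.symm
      · left; rw [abs_of_pos h]; exact ht.2
    have hsmall : dist (t • z) 0 < δ₁ := by
      rw [dist_zero_right, norm_smul, Real.norm_eq_abs]
      calc |t| * ‖z‖ ≤ 1 * ‖z‖ := by
            apply mul_le_mul_of_nonneg_right _ (norm_nonneg z)
            rcases ht' with h | h
            · exact h.le
            · simp [h]
        _ < δ₁ := by simpa using hzδ₁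
    have hest := hev hsmall
    have heq : φ' t = (g (y + t • z) - g y - B (t • z)) z := by
      simp only [hφ', ContinuousLinearMap.sub_apply, _root_.map_smul, smul_eq_mul,
        ContinuousLinearMap.smul_apply]
    rw [heq, Real.norm_eq_abs]
    have hop : ‖g (y + t • z) - g y - B (t • z)‖ ≤ η * ‖z‖ := by
      refine le_trans (by simpa [dist_zero_right] using hest) ?_
      rw [norm_smul, Real.norm_eq_abs]
      have : |t| * ‖z‖ ≤ 1 * ‖z‖ := by
        apply mul_le_mul_of_nonneg_right _ (norm_nonneg z)
        rcases ht' with h | h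
        · exact h.le
        · simp [h]
      nlinarith [norm_nonneg z, hη.le]
    calc |(g (y + t • z) - g y - B (t • z)) z|
        ≤ ‖g (y + t • z) - g y - B (t • z)‖ * ‖z‖ :=
          (g (y + t • z) - g y - B (t • z)).le_opNorm z
      _ ≤ (η * ‖z‖) * ‖z‖ := mul_le_mul_of_nonneg_right hop (norm_nonneg z)
      _ = η * ‖z‖^2 := by ring
  have hfin := norm_image_sub_le_of_norm_deriv_le_segment'
    (fun t ht => (hder t ht).hasDerivWithinAt) hbound 1 (right_mem_Icc.2 zero_le_one)
  have hφ0 : φ 0 = f y := by simp [hφ]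
  have hφ1 : φ 1 = f (y + z) - g y z - (B z z)/2 := by
    simp [hφ]
    ring
  rw [hφ0, hφ1] at hfin
  simp only [Real.norm_eq_abs] at hfin
  calc |f (y + z) - f y - fderiv ℝ f y z - (fderiv ℝ (fderiv ℝ f) y z z)/2|
      = |f (y + z) - g y z - B z z / 2 - f y| := by rw [← hgdef, ← hBdef]; congr 1; ring
    _ ≤ η * ‖z‖^2 := by linarith [hfin]

lemma lapl_eq_sum {f : EuclideanSpace ℝ (Fin d) → ℝ} {y : EuclideanSpace ℝ (Fin d)}
    {B : EuclideanSpace ℝ (Fin d) →L[ℝ] EuclideanSpace ℝ (Fin d) →L[ℝ] ℝ}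
    (hB : HasFDerivAt (fderiv ℝ f) B y) :
    lapl d f y = ∑ i, B (EuclideanSpace.single i (1:ℝ)) (EuclideanSpace.single i (1:ℝ)) := by
  refine Finset.sum_congr rfl fun i _ => ?_
  have h1 : HasFDerivAt (fun x => fderiv ℝ f x (EuclideanSpace.single i (1:ℝ)))
      ((ContinuousLinearMap.apply ℝ ℝ (EuclideanSpace.single i (1:ℝ))).comp B) y :=
    (ContinuousLinearMap.apply ℝ ℝ (EuclideanSpace.single i (1:ℝ))).hasFDerivAt.comp y hB
  rw [h1.fderiv]
  rfl

lemma volume_ball_toReal (hd : 0 < d) (y : EuclideanSpace ℝ (Fin d)) {r : ℝ} (hr : 0 ≤ r) :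
    (volume (ball y r)).toReal = r ^ d * (volume (ball (0:EuclideanSpace ℝ (Fin d)) 1)).toReal := by
  haveI : Nonempty (Fin d) := ⟨⟨0, hd⟩⟩
  haveI : Nontrivial (EuclideanSpace ℝ (Fin d)) := inferInstance
  rw [Measure.addHaar_ball volume y hr, finrank_euclideanSpace_fin]
  rw [ENNReal.toReal_mul, ENNReal.toReal_ofReal (by positivity)]

lemma volume_ball_eq (y : EuclideanSpace ℝ (Fin d)) (r : ℝ) :
    volume (ball y r) = volume (ball (0 : EuclideanSpace ℝ (Fin d)) r) := by
  exact Measure.addHaar_ball_center volume y r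

lemma cont_bilin (B : EuclideanSpace ℝ (Fin d) →L[ℝ] EuclideanSpace ℝ (Fin d) →L[ℝ] ℝ) :
    Continuous (fun z : EuclideanSpace ℝ (Fin d) => B z z) := by
  have : Continuous (fun p : EuclideanSpace ℝ (Fin d) × EuclideanSpace ℝ (Fin d) => B p.1 p.2) :=
    B.continuous₂
  exact this.comp (continuous_id.prodMk continuous_id)

/-- Key estimate: average of a `C²` function with vanishing Laplacian over small balls
is at least the center value minus `η r²`. -/
lemma avg_ball_ge (hd : 0 < d) {f : EuclideanSpace ℝ (Fin d) → ℝ}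
    {U : Set (EuclideanSpace ℝ (Fin d))} (hU : IsOpen U) {y : EuclideanSpace ℝ (Fin d)}
    (hy : y ∈ U) (hf : ContDiffOn ℝ 2 f U) (hlap : lapl d f y = 0) {η : ℝ} (hη : 0 < η) :
    ∃ δ > 0, ∀ r : ℝ, 0 < r → r < δ →
      f y - η * r^2 ≤ ⨍ x in ball y r, f x := by
  obtain ⟨δ, hδ, hδU, htay⟩ := taylor_est hU hy hf hη
  refine ⟨δ, hδ, fun r hr hrδ => ?_⟩
  set D := fderiv ℝ f y with hD
  set B := fderiv ℝ (fderiv ℝ f) y with hBd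
  have hfat : ContDiffAt ℝ 2 f y := hf.contDiffAt (hU.mem_nhds hy)
  have hg : ContDiffAt ℝ 1 (fderiv ℝ f) y := hfat.fderiv_right (by norm_num)
  have hB : HasFDerivAt (fderiv ℝ f) B y := (hg.differentiableAt one_ne_zero).hasFDerivAt
  have hsum : ∑ i, B (EuclideanSpace.single i (1:ℝ)) (EuclideanSpace.single i (1:ℝ)) = 0 := by
    rw [← lapl_eq_sum hB]; exact hlap
  set V := (volume (ball (0 : EuclideanSpace ℝ (Fin d)) r)).toReal with hVd
  have hV : 0 < V :=
    ENNReal.toReal_pos (measure_ball_pos volume 0 hr).ne' measure_ball_lt_top.ne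
  -- integrability
  have hmemtrans : ∀ z ∈ closedBall (0 : EuclideanSpace ℝ (Fin d)) r, y + z ∈ ball y δ := by
    intro z hz
    rw [mem_ball, dist_eq_norm, add_sub_cancel_left]
    exact lt_of_le_of_lt (by simpa [dist_eq_norm] using hz) hrδ
  have hcf : ContinuousOn (fun z : EuclideanSpace ℝ (Fin d) => f (y + z))
      (closedBall 0 r) := by
    refine ((hf.continuousOn.mono hδU).comp ((continuous_const.add continuous_id).continuousOn))
      hmemtrans
  have hif : IntegrableOn (fun z : EuclideanSpace ℝ (Fin d) => f (y + z)) (ball 0 r) volume :=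
    integrableOn_ball_of_continuous hcf
  have hiD : IntegrableOn (fun z : EuclideanSpace ℝ (Fin d) => D z) (ball 0 r) volume :=
    integrableOn_ball_of_continuous' D.continuous
  have hiB : IntegrableOn (fun z : EuclideanSpace ℝ (Fin d) => B z z) (ball 0 r) volume :=
    integrableOn_ball_of_continuous' (cont_bilin B)
  have hilow : IntegrableOn (fun z : EuclideanSpace ℝ (Fin d) =>
      f y + D z + B z z / 2 - η * r^2) (ball 0 r) volume := by
    exact (((integrableOn_const measure_ball_lt_top.ne).add hiD).add (hiB.div_const 2)).sub
      (integrableOn_const measure_ball_lt_top.ne)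
  -- pointwise lower bound
  have hpt : ∀ z ∈ ball (0 : EuclideanSpace ℝ (Fin d)) r,
      f y + D z + B z z / 2 - η * r^2 ≤ f (y + z) := by
    intro z hz
    rw [mem_ball, dist_eq_norm, sub_zero] at hz
    have h1 := htay z (hz.trans hrδ)
    have h2 : η * ‖z‖^2 ≤ η * r^2 := by
      apply mul_le_mul_of_nonneg_left _ hη.le
      have := norm_nonneg z
      nlinarith
    rw [abs_le] at h1
    linarith [h1.1]
  -- integral identities
  have hDint : ∫ z in ball (0 : EuclideanSpace ℝ (Fin d)) r, D z = 0 :=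
    setIntegral_ball_odd r (fun z => by simp)
  have hzsq : ∀ i : Fin d, ∫ z in ball (0 : EuclideanSpace ℝ (Fin d)) r, (z i)^2
      = (∫ z in ball (0 : EuclideanSpace ℝ (Fin d)) r, ‖z‖^2) / d := by
    intro i
    rw [← setIntegral_coord_sq i r]
    field_simp
  have hBint : ∫ z in ball (0 : EuclideanSpace ℝ (Fin d)) r, B z z = 0 := by
    have hexp : ∫ z in ball (0 : EuclideanSpace ℝ (Fin d)) r, B z z
        = ∑ i, ∑ j, (∫ z in ball (0 : EuclideanSpace ℝ (Fin d)) r, z i * z j) *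
            B (EuclideanSpace.single i (1:ℝ)) (EuclideanSpace.single j (1:ℝ)) := by
      simp_rw [bilin_expand B]
      rw [integral_finset_sum]
      · refine Finset.sum_congr rfl fun i _ => ?_
        rw [integral_finset_sum]
        · exact Finset.sum_congr rfl fun j _ => integral_mul_const _ _
        · intro j _
          exact integrableOn_ball_of_continuous'
            ((((EuclideanSpace.proj i).continuous.mul
              (EuclideanSpace.proj j).continuous)).mul continuous_const)
      · intro i _
        apply integrable_finset_sum
        intro j _
        exact integrableOn_ball_of_continuous'
          ((((EuclideanSpace.proj i).continuous.mul
            (EuclideanSpace.proj j).continuous)).mul continuous_const)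
    rw [hexp]
    have hdiag : ∀ i : Fin d, ∑ j, (∫ z in ball (0 : EuclideanSpace ℝ (Fin d)) r, z i * z j) *
        B (EuclideanSpace.single i (1:ℝ)) (EuclideanSpace.single j (1:ℝ))
        = ((∫ z in ball (0 : EuclideanSpace ℝ (Fin d)) r, ‖z‖^2) / d) *
            B (EuclideanSpace.single i (1:ℝ)) (EuclideanSpace.single i (1:ℝ)) := by
      intro i
      rw [Finset.sum_eq_single i]
      · have heq2 : (∫ z in ball (0 : EuclideanSpace ℝ (Fin d)) r, z i * z i)
            = ∫ z in ball (0 : EuclideanSpace ℝ (Fin d)) r, (z i)^2 := by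
          refine setIntegral_congr_fun measurableSet_ball fun z _ => ?_
          ring
        rw [heq2, hzsq i]
      · intro j _ hji
        rw [setIntegral_coord_mul (Ne.symm hji) r, zero_mul]
      · intro h; exact absurd (Finset.mem_univ i) h
    rw [Finset.sum_congr rfl fun i _ => hdiag i, ← Finset.mul_sum, hsum, mul_zero]
  -- lower bound for the integral
  have hmono : ∫ z in ball (0 : EuclideanSpace ℝ (Fin d)) r,
      (f y + D z + B z z / 2 - η * r^2)
      ≤ ∫ z in ball (0 : EuclideanSpace ℝ (Fin d)) r, f (y + z) :=
    setIntegral_mono_on hilow hif measurableSet_ball hpt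
  have hlowval : ∫ z in ball (0 : EuclideanSpace ℝ (Fin d)) r,
      (f y + D z + B z z / 2 - η * r^2) = (f y - η * r^2) * V := by
    have hre : ∀ z : EuclideanSpace ℝ (Fin d), f y + D z + B z z / 2 - η * r^2
        = (f y - η * r^2) + (D z + B z z / 2) := fun z => by ring
    simp_rw [hre]
    have hiDB : IntegrableOn (fun z : EuclideanSpace ℝ (Fin d) => D z + B z z / 2)
        (ball 0 r) volume := by exact hiD.add (hiB.div_const 2)
    have hiB2 : IntegrableOn (fun z : EuclideanSpace ℝ (Fin d) => B z z / 2)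
        (ball 0 r) volume := by exact hiB.div_const 2
    rw [integral_add (integrableOn_const (C := f y - η * r^2) measure_ball_lt_top.ne) hiDB,
      integral_add hiD hiB2, integral_div, hBint, hDint, setIntegral_const]
    simp only [smul_eq_mul, measureReal_def, ← hVd]
    ring
  -- conclude via the average
  have htrans := setIntegral_ball_translate y r f
  rw [setAverage_eq, measureReal_def, volume_ball_eq y r, ← hVd, htrans, smul_eq_mul]

  have : (f y - η * r^2) * V ≤ ∫ z in ball (0 : EuclideanSpace ℝ (Fin d)) r, f (y + z) := by
    rw [← hlowval]; exact hmono
  calc f y - η * r^2 = V⁻¹ * ((f y - η * r^2) * V) := by field_simp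
    _ ≤ V⁻¹ * ∫ z in ball (0 : EuclideanSpace ℝ (Fin d)) r, f (y + z) :=
        mul_le_mul_of_nonneg_left this (inv_nonneg.2 hV.le)
lemma avg_ge_of_min {h : EuclideanSpace ℝ (Fin d) → ℝ} (hc : Continuous h)
    {y : EuclideanSpace ℝ (Fin d)} {r : ℝ} (hr : 0 < r)
    (hmin : ∀ x ∈ ball y r, h y ≤ h x) : h y ≤ ⨍ x in ball y r, h x := by
  set V := (volume (ball y r)).toReal with hVd
  have hV : 0 < V :=
    ENNReal.toReal_pos (measure_ball_pos volume y hr).ne' measure_ball_lt_top.ne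
  have hint : h y * V ≤ ∫ x in ball y r, h x := by
    have := setIntegral_ge_of_const_le (μ := volume) measurableSet_ball
      measure_ball_lt_top.ne hmin (integrableOn_ball_of_continuous' hc)
    rw [measureReal_def, ← hVd, smul_eq_mul, mul_comm] at this; exact this
  rw [setAverage_eq, smul_eq_mul, measureReal_def, ← hVd]
  calc h y = V⁻¹ * (h y * V) := by field_simp
    _ ≤ V⁻¹ * ∫ x in ball y r, h x := mul_le_mul_of_nonneg_left hint (inv_nonneg.2 hV.le)

lemma avg_norm_sq_ge (hd : 0 < d) (y : EuclideanSpace ℝ (Fin d)) {r : ℝ} (hr : 0 < r) :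
    ‖y‖^2 + ((1 - (1/2:ℝ)^d)/4) * r^2 ≤ ⨍ x in ball y r, ‖x‖^2 := by
  set V := (volume (ball (0:EuclideanSpace ℝ (Fin d)) r)).toReal with hVd
  have hV : 0 < V :=
    ENNReal.toReal_pos (measure_ball_pos volume 0 hr).ne' measure_ball_lt_top.ne
  have hiN : IntegrableOn (fun z : EuclideanSpace ℝ (Fin d) => ‖z‖^2) (ball 0 r) volume :=
    integrableOn_ball_of_continuous' (continuous_norm.pow 2)
  have hiI : IntegrableOn (fun z : EuclideanSpace ℝ (Fin d) => 2 * (inner ℝ y z : ℝ))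
      (ball 0 r) volume :=
    integrableOn_ball_of_continuous' (continuous_const.mul (continuous_const.inner continuous_id))
  -- lower bound for ∫ ‖z‖²
  have hNlow : ((1 - (1/2:ℝ)^d)/4) * r^2 * V
      ≤ ∫ z in ball (0:EuclideanSpace ℝ (Fin d)) r, ‖z‖^2 := by
    set A := ball (0:EuclideanSpace ℝ (Fin d)) r \ ball 0 (r/2) with hA
    have hsub : ball (0:EuclideanSpace ℝ (Fin d)) (r/2) ⊆ ball 0 r :=
      ball_subset_ball (by linarith)
    have hAmeas : MeasurableSet A := measurableSet_ball.diff measurableSet_ball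
    have hAvol : (volume A).toReal = (1 - (1/2:ℝ)^d) * V := by
      rw [hA, measure_diff hsub measurableSet_ball.nullMeasurableSet measure_ball_lt_top.ne]
      rw [ENNReal.toReal_sub_of_le (measure_mono hsub) measure_ball_lt_top.ne]
      have e1 := volume_ball_toReal (d := d) hd 0 hr.le
      have e2 := volume_ball_toReal (d := d) hd 0 (show (0:ℝ) ≤ r/2 by linarith)
      rw [hVd, e1, e2, div_pow]
      rw [one_div, inv_pow]
      ring
    have h1 : ((r/2)^2) * (volume A).toReal ≤ ∫ z in A, ‖z‖^2 := by
      rw [mul_comm, ← measureReal_def, ← smul_eq_mul]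
      refine setIntegral_ge_of_const_le hAmeas
        (ne_of_lt (lt_of_le_of_lt (measure_mono Set.diff_subset) measure_ball_lt_top)) ?_
        (hiN.mono_set Set.diff_subset)
      intro x hx
      have hx2 : r/2 ≤ ‖x‖ := by
        by_contra hcon
        exact hx.2 (by simpa [mem_ball, dist_eq_norm] using lt_of_not_ge hcon)
      have : 0 ≤ r/2 := by linarith
      nlinarith
    have h2 : ∫ z in A, ‖z‖^2 ≤ ∫ z in ball (0:EuclideanSpace ℝ (Fin d)) r, ‖z‖^2 := by
      refine setIntegral_mono_set hiN ?_ (HasSubset.Subset.eventuallyLE Set.diff_subset)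
      exact Filter.Eventually.of_forall fun z => by positivity
    calc ((1 - (1/2:ℝ)^d)/4) * r^2 * V = ((r/2)^2) * ((1 - (1/2:ℝ)^d) * V) := by ring
      _ ≤ ∫ z in A, ‖z‖^2 := by rw [← hAvol]; exact h1
      _ ≤ _ := h2
  -- expansion of ‖y + z‖²
  have hexp : ∫ x in ball y r, ‖x‖^2
      = ‖y‖^2 * V + ∫ z in ball (0:EuclideanSpace ℝ (Fin d)) r, ‖z‖^2 := by
    rw [setIntegral_ball_translate y r (fun x => ‖x‖^2)]
    have hre : ∀ z : EuclideanSpace ℝ (Fin d),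
        ‖y + z‖^2 = ‖y‖^2 + (2 * (inner ℝ y z : ℝ) + ‖z‖^2) := by
      intro z
      rw [norm_add_sq_real]
      ring
    simp_rw [hre]
    have hi2 : IntegrableOn (fun z : EuclideanSpace ℝ (Fin d) =>
        2 * (inner ℝ y z : ℝ) + ‖z‖^2) (ball 0 r) volume := by exact hiI.add hiN
    rw [integral_add (integrableOn_const (C := ‖y‖^2) measure_ball_lt_top.ne) hi2,
      integral_add hiI hiN, setIntegral_const]
    have hodd : ∫ z in ball (0:EuclideanSpace ℝ (Fin d)) r, 2 * (inner ℝ y z : ℝ) = 0 :=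
      setIntegral_ball_odd r (fun z => by rw [inner_neg_right]; ring)
    rw [hodd]
    simp only [smul_eq_mul, measureReal_def, ← hVd]
    ring
  rw [setAverage_eq, measureReal_def, volume_ball_eq y r, ← hVd, smul_eq_mul, hexp]
  have : (‖y‖^2 + ((1 - (1/2:ℝ)^d)/4) * r^2) * V ≤ ‖y‖^2 * V +
      ∫ z in ball (0:EuclideanSpace ℝ (Fin d)) r, ‖z‖^2 := by nlinarith [hNlow]
  calc ‖y‖^2 + ((1 - (1/2:ℝ)^d)/4) * r^2
      = V⁻¹ * ((‖y‖^2 + ((1 - (1/2:ℝ)^d)/4) * r^2) * V) := by field_simp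
    _ ≤ V⁻¹ * (‖y‖^2 * V + ∫ z in ball (0:EuclideanSpace ℝ (Fin d)) r, ‖z‖^2) :=
        mul_le_mul_of_nonneg_left this (inv_nonneg.2 hV.le)

end St2
namespace St2

lemma thinEmbed_thinProj {n : ℕ} {y : EuclideanSpace ℝ (Fin (n+1))}
    (hy : y (Fin.last n) = 0) : thinEmbed n (thinProj n y) 0 = y := by
  ext j
  show (Fin.snoc (fun i => thinProj n y i) (0:ℝ) : Fin (n+1) → ℝ) j = y j
  refine Fin.lastCases ?_ (fun i => ?_) j
  · rw [Fin.snoc_last, hy]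
  · rw [Fin.snoc_castSucc]
    rfl

lemma contactSet_closed {n : ℕ} (φ : EuclideanSpace ℝ (Fin n) → ℝ) (hφ : Continuous φ)
    (u : EuclideanSpace ℝ (Fin (n+1)) → ℝ) (hu : Continuous u) :
    IsClosed (contactSet n φ u) := by
  have h1 : Continuous (fun x : EuclideanSpace ℝ (Fin (n+1)) => x (Fin.last n)) :=
    (EuclideanSpace.proj (Fin.last n)).continuous
  have h2 : Continuous (thinProj n) := by
    have : Continuous (fun x : EuclideanSpace ℝ (Fin (n+1)) => fun i : Fin n => x i.castSucc) :=
      continuous_pi fun i => (EuclideanSpace.proj i.castSucc).continuous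
    exact (EuclideanSpace.equiv (Fin n) ℝ).symm.continuous.comp this
  have heq : contactSet n φ u
      = {x : EuclideanSpace ℝ (Fin (n+1)) | x (Fin.last n) = 0}
        ∩ {x : EuclideanSpace ℝ (Fin (n+1)) | u x = φ (thinProj n x)} := rfl
  rw [heq]
  exact (isClosed_eq h1 continuous_const).inter (isClosed_eq hu (hφ.comp h2))

end St2

/-- Evaluation of a real polynomial at a point of `ℝ^d`. -/
def pev {d : ℕ} (q : MvPolynomial (Fin d) ℝ) (x : EuclideanSpace ℝ (Fin d)) : ℝ :=
  MvPolynomial.eval (fun i => x i) q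

/-- Polynomial growth (of some order). -/
def HasPolyGrowth (d : ℕ) (u : EuclideanSpace ℝ (Fin d) → ℝ) : Prop :=
  ∃ (m : ℕ) (C : ℝ), ∀ x, |u x| ≤ C * (1 + ‖x‖ ^ m)

/-- Polynomial growth of order exactly `m` (and `m` is the smallest such order). -/
def PolyGrowthOrder (d : ℕ) (u : EuclideanSpace ℝ (Fin d) → ℝ) (m : ℕ) : Prop :=
  (∃ C : ℝ, ∀ x, |u x| ≤ C * (1 + ‖x‖ ^ m)) ∧
  ∀ m' : ℕ, (∃ C : ℝ, ∀ x, |u x| ≤ C * (1 + ‖x‖ ^ m')) → m ≤ m'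

/-- The class `𝒫ᵒ_{n+1}`: polynomials `q` even in the last variable such that
`x_{n+1} q(x)` is harmonic and `closure {q(·,0) < 0}` is compact. -/
def MemPo (n : ℕ) (q : MvPolynomial (Fin (n + 1)) ℝ) : Prop :=
  (∀ x' t, pev q (thinEmbed n x' t) = pev q (thinEmbed n x' (-t))) ∧
  IsHarmonicOnSet (n + 1) (fun x => x (Fin.last n) * pev q x) Set.univ ∧
  IsCompact (closure {x' : EuclideanSpace ℝ (Fin n) | pev q (thinEmbed n x' 0) < 0})

/-- The class `𝒫ᵉ_{n+1}`: harmonic polynomials `p` even in the last variable such that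
`closure {p(·,0) < 0}` is compact. -/
def MemPe (n : ℕ) (p : MvPolynomial (Fin (n + 1)) ℝ) : Prop :=
  (∀ x' t, pev p (thinEmbed n x' t) = pev p (thinEmbed n x' (-t))) ∧
  IsHarmonicOnSet (n + 1) (pev p) Set.univ ∧
  IsCompact (closure {x' : EuclideanSpace ℝ (Fin n) | pev p (thinEmbed n x' 0) < 0})

/-- `f(x) → 0` as `|x| → ∞`. -/
def VanishAtInfty (d : ℕ) (f : EuclideanSpace ℝ (Fin d) → ℝ) : Prop :=
  ∀ ε > 0, ∃ R : ℝ, ∀ x, R ≤ ‖x‖ → |f x| < ε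

/-- The embedding of a subset of `ℝ^n` into the thin space of `ℝ^{n+1}`. -/
def thinSet (n : ℕ) (S : Set (EuclideanSpace ℝ (Fin n))) :
    Set (EuclideanSpace ℝ (Fin (n + 1))) :=
  (fun x' => thinEmbed n x' 0) '' S

/-- The free boundary `Γ(u)`: the boundary in `ℝ^n` of the positivity set, embedded. -/
def freeBoundary (n : ℕ) (u : EuclideanSpace ℝ (Fin (n + 1)) → ℝ) :
    Set (EuclideanSpace ℝ (Fin (n + 1))) :=
  thinSet n (frontier {x' : EuclideanSpace ℝ (Fin n) | 0 < u (thinEmbed n x' 0)})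

/-- Negating the `i`-th coordinate of a point of `ℝ^d`. -/
def negCoordAt (d : ℕ) (i : Fin d) (x : EuclideanSpace ℝ (Fin d)) :
    EuclideanSpace ℝ (Fin d) :=
  (EuclideanSpace.equiv (Fin d) ℝ).symm (Function.update (fun j => x j) i (-(x i)))

/-- The constant `ρ̄(k, n)`, where `κ = k/(n-1)`. -/
def rhoBar (k n : ℕ) : ℝ :=
  ((k : ℝ) / ((n : ℝ) - 1)) ^ (-(1 : ℝ) / (((n : ℝ) - 1) * ((k : ℝ) / ((n : ℝ) - 1) + 1))) *
    (((k : ℝ) / ((n : ℝ) - 1)) ^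
        (-((k : ℝ) / ((n : ℝ) - 1)) / ((k : ℝ) / ((n : ℝ) - 1) + 1)) +
      ((k : ℝ) / ((n : ℝ) - 1)) ^ ((1 : ℝ) / ((k : ℝ) / ((n : ℝ) - 1) + 1))) ^
      (-(1 : ℝ) / (((n : ℝ) - 1) * ((k : ℝ) / ((n : ℝ) - 1))))

/-- The barrier function `g_{A,t}(r) = A r^{1-n} + t - 1 + r^k`. -/
def gfun (n k : ℕ) (A t r : ℝ) : ℝ :=
  A * r ^ ((1 : ℝ) - (n : ℝ)) + t - 1 + r ^ k

/-- comparison principle for global solutions of the thin obstacle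
problem: a supersolution above the obstacle lying asymptotically above a solution
at infinity dominates it everywhere. -/
theorem statement2 (n : ℕ) (hn : 1 ≤ n)
    (φ : EuclideanSpace ℝ (Fin n) → ℝ) (hφ : Continuous φ)
    (v₁ v₂ : EuclideanSpace ℝ (Fin (n + 1)) → ℝ)
    (h1 : IsGlobalSolution n φ v₁)
    (h2cont : Continuous v₂)
    (h2even : ∀ x' t, v₂ (thinEmbed n x' t) = v₂ (thinEmbed n x' (-t)))
    (h2obst : ∀ x', φ x' ≤ v₂ (thinEmbed n x' 0))
    (h2super : SuperMeanVal (n + 1) v₂)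
    (hliminf : ∀ ε > 0, ∃ R : ℝ, ∀ x : EuclideanSpace ℝ (Fin (n + 1)),
      R ≤ ‖x‖ → -ε ≤ v₂ x - v₁ x) :
    ∀ x, v₁ x ≤ v₂ x := by
  intro x₀
  by_contra hcon
  push_neg at hcon
  obtain ⟨hv₁c, hv₁even, hv₁obst, hv₁harm, hv₁super⟩ := h1
  set δ := v₁ x₀ - v₂ x₀ with hδdef
  have hδpos : 0 < δ := by simp only [hδdef]; linarith
  obtain ⟨R₀, hR₀⟩ := hliminf (δ/2) (by linarith)
  set R := max R₀ (‖x₀‖ + 1) with hRdef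
  have hx₀R : ‖x₀‖ < R := lt_of_lt_of_le (by linarith) (le_max_right _ _)
  have hRpos : 0 < R := lt_of_le_of_lt (norm_nonneg x₀) hx₀R
  set ε := δ / (4 * R^2) with hεdef
  have hεpos : 0 < ε := by positivity
  have hεR : ε * R^2 = δ/4 := by
    rw [hεdef]; field_simp
  set h : EuclideanSpace ℝ (Fin (n+1)) → ℝ := fun x => v₂ x - v₁ x - ε * ‖x‖^2 with hhdef
  have hhc : Continuous h :=
    (h2cont.sub hv₁c).sub (continuous_const.mul (continuous_norm.pow 2))
  obtain ⟨y, hyB, hymin'⟩ := (isCompact_closedBall (0 : EuclideanSpace ℝ (Fin (n+1))) R)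
    |>.exists_isMinOn ⟨x₀, mem_closedBall_zero_iff.2 hx₀R.le⟩ hhc.continuousOn
  have hymin : ∀ x ∈ closedBall (0 : EuclideanSpace ℝ (Fin (n+1))) R, h y ≤ h x :=
    fun x hx => hymin' hx
  have hyR : ‖y‖ ≤ R := mem_closedBall_zero_iff.1 hyB
  have hεy : ε * ‖y‖^2 ≤ δ/4 := by
    rw [← hεR]
    have h1' : ‖y‖^2 ≤ R^2 := by nlinarith [norm_nonneg y]
    nlinarith
  have hhx₀ : h x₀ ≤ -δ := by
    have h2' : 0 ≤ ε * ‖x₀‖^2 := by positivity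
    have h3' : h x₀ = v₂ x₀ - v₁ x₀ - ε * ‖x₀‖^2 := rfl
    have h4' : δ = v₁ x₀ - v₂ x₀ := hδdef
    linarith
  have hhy : h y ≤ -δ := le_trans (hymin x₀ (mem_closedBall_zero_iff.2 hx₀R.le)) hhx₀
  have hynorm : ‖y‖ < R := by
    rcases lt_or_ge ‖y‖ R with hlt | hge
    · exact hlt
    have hR₀y : R₀ ≤ ‖y‖ := le_trans (le_max_left _ _) hge
    have hwy' := hR₀ y hR₀y
    have h3' : h y = v₂ y - v₁ y - ε * ‖y‖^2 := rfl
    linarith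
  have hwy : v₂ y - v₁ y < 0 := by
    have h3' : h y = v₂ y - v₁ y - ε * ‖y‖^2 := rfl
    linarith
  have hyU : y ∈ (contactSet n φ v₁)ᶜ := by
    intro hyc
    obtain ⟨hlast, hval⟩ := hyc
    have hob := h2obst (thinProj n y)
    rw [St2.thinEmbed_thinProj hlast] at hob
    rw [hval] at hwy
    linarith
  have hUopen : IsOpen (contactSet n φ v₁)ᶜ :=
    (St2.contactSet_closed φ hφ v₁ hv₁c).isOpen_compl
  set c : ℝ := (1 - (1/2:ℝ)^(n+1))/4 with hcdef
  have hcpos : 0 < c := by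
    have h12 : (1/2:ℝ)^(n+1) < 1 := pow_lt_one₀ (by norm_num) (by norm_num) (Nat.succ_ne_zero n)
    rw [hcdef]; linarith
  have hηpos : 0 < ε * c / 2 := by positivity
  obtain ⟨δ₀, hδ₀, havg1⟩ := St2.avg_ball_ge (Nat.succ_pos n) hUopen hyU hv₁harm.1
    (hv₁harm.2 y hyU) hηpos
  set r := min (δ₀/2) ((R - ‖y‖)/2) with hrdef
  have hrpos : 0 < r := lt_min (by linarith) (by linarith)
  have hrδ₀ : r < δ₀ := lt_of_le_of_lt (min_le_left _ _) (by linarith)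
  have hballsub : ball y r ⊆ closedBall (0 : EuclideanSpace ℝ (Fin (n+1))) R := by
    intro x hx
    rw [mem_ball, dist_eq_norm] at hx
    rw [mem_closedBall_zero_iff]
    have h1' : ‖x‖ ≤ ‖x - y‖ + ‖y‖ := by simpa using norm_add_le (x - y) y
    have h2' : r ≤ (R - ‖y‖)/2 := min_le_right _ _
    linarith
  have hA2 : ⨍ x in ball y r, v₂ x ≤ v₂ y := h2super y r hrpos
  have hA1 : v₁ y - (ε * c / 2) * r^2 ≤ ⨍ x in ball y r, v₁ x := havg1 r hrpos hrδ₀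
  have hAN : ‖y‖^2 + c * r^2 ≤ ⨍ x in ball y r, ‖x‖^2 := by
    have h5' := St2.avg_norm_sq_ge (d := n+1) (Nat.succ_pos n) y hrpos
    rw [← hcdef] at h5'
    exact h5'
  have hAh : h y ≤ ⨍ x in ball y r, h x :=
    St2.avg_ge_of_min hhc hrpos (fun x hx => hymin x (hballsub hx))
  set V := (volume (ball y r)).toReal with hVdef
  have hi2 : IntegrableOn v₂ (ball y r) volume := St2.integrableOn_ball_of_continuous' h2cont
  have hi1 : IntegrableOn v₁ (ball y r) volume := St2.integrableOn_ball_of_continuous' hv₁c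
  have hi21 : IntegrableOn (fun x : EuclideanSpace ℝ (Fin (n+1)) => v₂ x - v₁ x)
      (ball y r) volume := by exact hi2.sub hi1
  have hiN : IntegrableOn (fun x : EuclideanSpace ℝ (Fin (n+1)) => ε * ‖x‖^2)
      (ball y r) volume := by
    exact (St2.integrableOn_ball_of_continuous' (continuous_norm.pow 2)).const_mul ε
  have hint : ∫ x in ball y r, h x
      = (∫ x in ball y r, v₂ x) - (∫ x in ball y r, v₁ x) - ε * ∫ x in ball y r, ‖x‖^2 := by
    rw [show (∫ x in ball y r, h x)
        = ∫ x in ball y r, (v₂ x - v₁ x - ε * ‖x‖^2) from rfl,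
      integral_sub hi21 hiN, integral_sub hi2 hi1, integral_const_mul]
  have hsplit : ⨍ x in ball y r, h x
      = (⨍ x in ball y r, v₂ x) - (⨍ x in ball y r, v₁ x) - ε * ⨍ x in ball y r, ‖x‖^2 := by
    rw [setAverage_eq, setAverage_eq, setAverage_eq, setAverage_eq, hint]
    simp only [smul_eq_mul, measureReal_def, ← hVdef]
    ring
  have hεAN : ε * (‖y‖^2 + c * r^2) ≤ ε * ⨍ x in ball y r, ‖x‖^2 :=
    mul_le_mul_of_nonneg_left hAN hεpos.le
  have hrsq : 0 < r^2 := by positivity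
  have hfinal : ⨍ x in ball y r, h x ≤ h y - (ε * c / 2) * r^2 := by
    have hhy_eq : h y = v₂ y - v₁ y - ε * ‖y‖^2 := rfl
    rw [hsplit, hhy_eq]
    have hexp : ε * (‖y‖^2 + c * r^2) = ε * ‖y‖^2 + (ε * c) * r^2 := by ring
    have h2B : (ε * c) * r^2 = 2 * ((ε * c / 2) * r^2) := by ring
    rw [hexp] at hεAN
    linarith [hA2, hA1, hεAN, h2B]
  have hpos2 : 0 < (ε * c / 2) * r^2 := by positivity
  have hcontr := hAh.trans hfinal
  linarith [hcontr, hpos2]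


end
end

section
/- Let n ≥ 1 and let g be a continuous real-valued function on the closed unit ball of ℝ^n with g > 0 on the unit sphere, and suppose {g ≤ 0} := {x in the closed unit ball : g(x) ≤ 0} is nonempty. Then for every ε > 0 there exists η̄ > 0 such that for every η* ∈ (0, η̄], the Hausdorff distance between {g ≤ 0} and {x in the closed unit ball : g(x) ≤ η*} is at most ε. -/
open MeasureTheory Metric Set Filter

noncomputable section

/-- stability of sublevel sets in Hausdorff distance. -/
theorem statement15 (n : ℕ) (hn : 1 ≤ n)
    (g : EuclideanSpace ℝ (Fin n) → ℝ)
    (hg : ContinuousOn g (Metric.closedBall 0 1))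
    (hpos : ∀ x ∈ Metric.sphere (0 : EuclideanSpace ℝ (Fin n)) 1, 0 < g x)
    (hne : ({x ∈ Metric.closedBall (0 : EuclideanSpace ℝ (Fin n)) 1 | g x ≤ 0}).Nonempty) :
    ∀ ε > 0, ∃ ηbar > 0, ∀ ηstar ∈ Set.Ioc (0 : ℝ) ηbar,
      Metric.hausdorffDist
        {x ∈ Metric.closedBall (0 : EuclideanSpace ℝ (Fin n)) 1 | g x ≤ 0}
        {x ∈ Metric.closedBall (0 : EuclideanSpace ℝ (Fin n)) 1 | g x ≤ ηstar} ≤ ε := by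
  intro ε hε
  set K := Metric.closedBall (0 : EuclideanSpace ℝ (Fin n)) 1 with hK
  set A := {x ∈ K | g x ≤ 0} with hA
  have hKc : IsCompact K := isCompact_closedBall 0 1
  have hKcl : IsClosed K := hKc.isClosed
  have hAcl : IsClosed A := by
    have h := hg.preimage_isClosed_of_isClosed hKcl (isClosed_Iic (a := (0:ℝ)))
    have : A = K ∩ g ⁻¹' Set.Iic 0 := by ext x; simp only [hA, Set.mem_setOf_eq, Set.mem_inter_iff, Set.mem_preimage, Set.mem_Iic]
    rw [this]; exact h
  have hAK : A ⊆ K := fun x hx => hx.1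
  -- the compact set of points far from A
  set C := {x ∈ K | ε ≤ Metric.infDist x A} with hC
  have hCc : IsCompact C := by
    apply hKc.of_isClosed_subset _ (fun x hx => hx.1)
    exact hKcl.inter (isClosed_le continuous_const (Metric.continuous_infDist_pt A))
  have hgposC : ∀ x ∈ C, 0 < g x := by
    intro x hx
    by_contra h
    push_neg at h
    have hxA : x ∈ A := ⟨hx.1, h⟩
    have : Metric.infDist x A = 0 := by
      rw [Metric.infDist_zero_of_mem hxA]
    linarith [hx.2, this]
  -- choose ηbar
  obtain ⟨ηbar, hηbar, hηsmall⟩ :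
      ∃ ηbar > 0, ∀ x ∈ K, g x ≤ ηbar → Metric.infDist x A < ε := by
    rcases C.eq_empty_or_nonempty with hCe | hCne
    · refine ⟨1, one_pos, fun x hxK _ => ?_⟩
      by_contra h
      push_neg at h
      have hxC : x ∈ C := ⟨hxK, h⟩
      rw [hCe] at hxC
      exact hxC
    · obtain ⟨x0, hx0C, hx0min⟩ := hCc.exists_isMinOn hCne (hg.mono fun x hx => hx.1)
      have hm : 0 < g x0 := hgposC x0 hx0C
      refine ⟨g x0 / 2, by linarith, fun x hxK hgx => ?_⟩
      by_contra h
      push_neg at h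
      have hxC : x ∈ C := ⟨hxK, h⟩
      have := hx0min hxC
      simp only [Set.mem_setOf_eq] at this
      linarith
  refine ⟨ηbar, hηbar, fun η hη => ?_⟩
  have hηpos := hη.1
  set Sη := {x ∈ K | g x ≤ η} with hS
  have hASη : A ⊆ Sη := fun x hx => ⟨hx.1, hx.2.trans hηpos.le⟩
  apply Metric.hausdorffDist_le_of_mem_dist hε.le
  · intro x hx
    exact ⟨x, hASη hx, by simpa using hε.le⟩
  · intro x hx
    have hlt : Metric.infDist x A < ε := hηsmall x hx.1 (hx.2.trans hη.2)
    obtain ⟨y, hyA, hxy⟩ := (Metric.infDist_lt_iff hne).mp hlt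
    exact ⟨y, hyA, hxy.le⟩

end
end

section
/- Let n ≥ 1 and let g be a continuous real-valued function on the closed unit ball of ℝ^n with g > 0 on the unit sphere, and suppose {g ≤ 0} := {x in the closed unit ball : g(x) ≤ 0} is nonempty. Then for every ε > 0 there exists η̄ > 0 such that for every set A contained in the open unit ball of ℝ^n satisfying {x : g(x) < η} ⊆ A ⊆ {x : g(x) ≤ η̄} for some η > 0, the Hausdorff distance between the topological boundary (in ℝ^n) of {g ≤ 0} and the topological boundary (in ℝ^n) of A is at most ε. -/
open MeasureTheory Metric Set Filter

noncomputable section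

/-- A preconnected set meeting both a set and its complement meets the frontier. -/
lemma seg_frontier' {E : Type*} [TopologicalSpace E] {t s : Set E}
    (ht : IsPreconnected t) (h1 : (t ∩ s).Nonempty) (h2 : (t \ s).Nonempty) :
    (t ∩ frontier s).Nonempty := by
  by_contra h
  rw [Set.not_nonempty_iff_eq_empty] at h
  have hdisj : ∀ x ∈ t, x ∉ frontier s := fun x hx hx' =>
    (Set.eq_empty_iff_forall_notMem.1 h x ⟨hx, hx'⟩)
  have key := ht (interior s) (closure s)ᶜ isOpen_interior isClosed_closure.isOpen_compl
    (fun x hx => by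
      rcases Classical.em (x ∈ interior s) with h' | h'
      · exact Or.inl h'
      · refine Or.inr fun hc => hdisj x hx ⟨hc, h'⟩)
    (by
      obtain ⟨x, hxt, hxs⟩ := h1
      refine ⟨x, hxt, ?_⟩
      rcases Classical.em (x ∈ interior s) with h' | h'
      · exact h'
      · exact absurd ⟨subset_closure hxs, h'⟩ (hdisj x hxt))
    (by
      obtain ⟨x, hxt, hxs⟩ := h2
      refine ⟨x, hxt, fun hc => ?_⟩
      exact hdisj x hxt ⟨hc, fun hi => hxs (interior_subset hi)⟩)
  obtain ⟨x, _, hx2, hx3⟩ := key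
  exact hx3 (subset_closure (interior_subset hx2))

/-- stability of the boundaries of sets trapped between sublevel
sets, in Hausdorff distance. -/
theorem statement16 (n : ℕ) (hn : 1 ≤ n)
    (g : EuclideanSpace ℝ (Fin n) → ℝ)
    (hg : ContinuousOn g (Metric.closedBall 0 1))
    (hpos : ∀ x ∈ Metric.sphere (0 : EuclideanSpace ℝ (Fin n)) 1, 0 < g x)
    (hne : ({x ∈ Metric.closedBall (0 : EuclideanSpace ℝ (Fin n)) 1 | g x ≤ 0}).Nonempty) :
    ∀ ε > 0, ∃ ηbar > 0, ∀ A : Set (EuclideanSpace ℝ (Fin n)),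
      A ⊆ Metric.ball 0 1 →
      (∃ η > 0, {x ∈ Metric.closedBall (0 : EuclideanSpace ℝ (Fin n)) 1 | g x < η} ⊆ A) →
      A ⊆ {x ∈ Metric.closedBall (0 : EuclideanSpace ℝ (Fin n)) 1 | g x ≤ ηbar} →
      Metric.hausdorffDist
        (frontier {x ∈ Metric.closedBall (0 : EuclideanSpace ℝ (Fin n)) 1 | g x ≤ 0})
        (frontier A) ≤ ε := by
  intro ε hε
  set K := {x ∈ Metric.closedBall (0 : EuclideanSpace ℝ (Fin n)) 1 | g x ≤ 0} with hKdef
  have hKcb : K ⊆ Metric.closedBall 0 1 := fun x hx => hx.1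
  have hKclosed : IsClosed K := by
    have hKeq : K = Metric.closedBall 0 1 ∩ g ⁻¹' Set.Iic 0 := by
      ext x; simp [hKdef, Set.mem_sep_iff]
    rw [hKeq]
    exact hg.preimage_isClosed_of_isClosed Metric.isClosed_closedBall isClosed_Iic
  have hKcomp : IsCompact K :=
    (isCompact_closedBall (0 : EuclideanSpace ℝ (Fin n)) 1).of_isClosed_subset hKclosed hKcb
  have hKball : K ⊆ Metric.ball 0 1 := by
    intro x hx
    rw [Metric.mem_ball]
    rcases lt_or_eq_of_le (Metric.mem_closedBall.1 hx.1) with h | h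
    · exact h
    · exact absurd hx.2 (not_le.2 (hpos x (Metric.mem_sphere.2 h)))
  -- a sphere point, not in K
  have hsph : ∃ x₀ : EuclideanSpace ℝ (Fin n), x₀ ∈ Metric.sphere (0 : EuclideanSpace ℝ (Fin n)) 1 := by
    refine ⟨EuclideanSpace.single (⟨0, hn⟩ : Fin n) (1 : ℝ), ?_⟩
    rw [mem_sphere_zero_iff_norm, EuclideanSpace.norm_single]
    simp
  obtain ⟨x₀, hx₀⟩ := hsph
  have hx₀K : x₀ ∉ K := fun h => absurd h.2 (not_le.2 (hpos x₀ hx₀))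
  have hKne_univ : K ≠ Set.univ := fun h => hx₀K (h ▸ Set.mem_univ x₀)
  have hFKne : (frontier K).Nonempty := nonempty_frontier_iff.2 ⟨hne, hKne_univ⟩
  have hFKsub : frontier K ⊆ K := hKclosed.frontier_subset
  have hFKcomp : IsCompact (frontier K) := hKcomp.of_isClosed_subset isClosed_frontier hFKsub
  -- Step A: thickening of K inside the ball
  obtain ⟨δ0, hδ0, hthick0⟩ := hKcomp.exists_thickening_subset_open Metric.isOpen_ball hKball
  set r := min ε δ0 with hrdef
  have hr : 0 < r := lt_min hε hδ0
  have hthick : Metric.thickening r K ⊆ Metric.ball 0 1 :=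
    (Metric.thickening_mono (min_le_right ε δ0) K).trans hthick0
  -- Step B: small sublevel sets lie in the thickening
  obtain ⟨η₁, hη₁, hS₁⟩ : ∃ η₁ > 0, ∀ z ∈ Metric.closedBall (0 : EuclideanSpace ℝ (Fin n)) 1,
      g z ≤ η₁ → z ∈ Metric.thickening r K := by
    set C := Metric.closedBall (0 : EuclideanSpace ℝ (Fin n)) 1 ∩ (Metric.thickening r K)ᶜ with hCdef
    have hCclosed : IsClosed C := Metric.isClosed_closedBall.inter Metric.isOpen_thickening.isClosed_compl
    have hCcomp : IsCompact C :=
      (isCompact_closedBall (0 : EuclideanSpace ℝ (Fin n)) 1).of_isClosed_subset hCclosed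
        Set.inter_subset_left
    by_cases hC : C.Nonempty
    · obtain ⟨z₀, hz₀, hmin⟩ := hCcomp.exists_isMinOn hC (hg.mono Set.inter_subset_left)
      have hz₀K : z₀ ∉ K := fun h => hz₀.2 (Metric.self_subset_thickening hr K h)
      have hz₀pos : 0 < g z₀ := by
        by_contra h
        exact hz₀K ⟨hz₀.1, le_of_not_gt h⟩
      refine ⟨g z₀ / 2, by linarith, fun z hz hgz => ?_⟩
      by_contra hzT
      have := hmin ⟨hz, hzT⟩
      simp only [Set.mem_setOf_eq] at this
      linarith
    · exact ⟨1, one_pos, fun z hz _ => by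
        by_contra hzT
        exact hC ⟨z, hz, hzT⟩⟩
  -- Step C: selection of positive points near the frontier of K
  have hsel : ∀ x ∈ frontier K, ∃ y, y ∈ Metric.closedBall (0 : EuclideanSpace ℝ (Fin n)) 1 ∧
      dist y x < ε / 2 ∧ 0 < g y := by
    intro x hx
    have hxK : x ∈ K := hFKsub hx
    have hxb : x ∈ Metric.ball (0 : EuclideanSpace ℝ (Fin n)) 1 := hKball hxK
    have hxc : x ∈ closure Kᶜ := by
      rw [frontier_eq_closure_inter_closure] at hx
      exact hx.2
    set s' := min (ε / 2) (1 - dist x 0) with hs'def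
    have hs' : 0 < s' := lt_min (by linarith) (by
      have := Metric.mem_ball.1 hxb; linarith)
    obtain ⟨y, hy1, hy2⟩ := mem_closure_iff.1 hxc (Metric.ball x s') Metric.isOpen_ball
      (Metric.mem_ball_self hs')
    have hd : dist y x < s' := Metric.mem_ball.1 hy1
    have hycb : y ∈ Metric.closedBall (0 : EuclideanSpace ℝ (Fin n)) 1 := by
      rw [Metric.mem_closedBall]
      have h1 : dist y 0 ≤ dist y x + dist x 0 := dist_triangle y x 0
      have h2 : s' ≤ 1 - dist x 0 := min_le_right _ _
      linarith
    have hgy : 0 < g y := by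
      by_contra h
      exact hy2 ⟨hycb, le_of_not_gt h⟩
    exact ⟨y, hycb, lt_of_lt_of_le hd (min_le_left _ _), hgy⟩
  choose! Y hY1 hY2 hY3 using hsel
  -- finite subcover of frontier K
  have hcover : frontier K ⊆ ⋃ i : frontier K, Metric.ball (i : EuclideanSpace ℝ (Fin n)) (ε / 2) :=
    fun x hx => Set.mem_iUnion.2 ⟨⟨x, hx⟩, Metric.mem_ball_self (by linarith)⟩
  obtain ⟨t, ht⟩ := hFKcomp.elim_finite_subcover
    (fun i : frontier K => Metric.ball (i : EuclideanSpace ℝ (Fin n)) (ε / 2))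
    (fun _ => Metric.isOpen_ball) hcover
  have htne : t.Nonempty := by
    obtain ⟨x, hx⟩ := hFKne
    obtain ⟨i, hi, _⟩ := Set.mem_iUnion₂.1 (ht hx)
    exact ⟨i, hi⟩
  set F : Finset ℝ := t.image (fun i : ↥(frontier K) => g (Y i.1)) with hFdef
  have hFne : F.Nonempty := htne.image _
  set η₂ := F.min' hFne with hη₂def
  have hη₂pos : 0 < η₂ := by
    obtain ⟨i, hi, hieq⟩ := Finset.mem_image.1 (F.min'_mem hFne)
    rw [hη₂def, ← hieq]
    exact hY3 i.1 i.2
  have hη₂le : ∀ i ∈ t, η₂ ≤ g (Y i.1) :=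
    fun i hi => F.min'_le _ (Finset.mem_image_of_mem _ hi)
  -- the final ηbar
  refine ⟨min η₁ (η₂ / 2), lt_min hη₁ (by linarith), ?_⟩
  intro A hA1 hA2 hA3
  obtain ⟨η, hη, hA2⟩ := hA2
  -- K is in the interior of A
  have hKintA : K ⊆ interior A := by
    intro x hx
    have hgx : g x < η := lt_of_le_of_lt hx.2 hη
    have hxb : x ∈ Metric.ball (0 : EuclideanSpace ℝ (Fin n)) 1 := hA1 (hA2 ⟨hx.1, hgx⟩)
    have hcx : ContinuousAt g x :=
      (hg x hx.1).continuousAt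
        (Filter.mem_of_superset (Metric.isOpen_ball.mem_nhds hxb) Metric.ball_subset_closedBall)
    rw [mem_interior_iff_mem_nhds]
    have h1 : g ⁻¹' Set.Iio η ∈ nhds x := hcx.preimage_mem_nhds (isOpen_Iio.mem_nhds hgx)
    filter_upwards [h1, Metric.isOpen_ball.mem_nhds hxb] with y hy1 hy2
    exact hA2 ⟨Metric.ball_subset_closedBall hy2, hy1⟩
  -- closure of A lies in the sublevel set
  set S := {x ∈ Metric.closedBall (0 : EuclideanSpace ℝ (Fin n)) 1 | g x ≤ min η₁ (η₂ / 2)}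
    with hSdef
  have hSclosed : IsClosed S := by
    have hSeq : S = Metric.closedBall 0 1 ∩ g ⁻¹' Set.Iic (min η₁ (η₂ / 2)) := by
      ext x; simp [hSdef, Set.mem_sep_iff]
    rw [hSeq]
    exact hg.preimage_isClosed_of_isClosed Metric.isClosed_closedBall isClosed_Iic
  have hclA : closure A ⊆ S := hSclosed.closure_subset_iff.2 hA3
  -- conclude via Hausdorff distance
  refine Metric.hausdorffDist_le_of_mem_dist hε.le ?_ ?_
  · -- every point of frontier K is close to frontier A
    intro x hx
    obtain ⟨i, hi, hxi⟩ := Set.mem_iUnion₂.1 (ht hx)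
    have hxi' : dist x (i : EuclideanSpace ℝ (Fin n)) < ε / 2 := Metric.mem_ball.1 hxi
    set y' := Y i.1 with hy'def
    have hy'd : dist y' i.1 < ε / 2 := hY2 i.1 i.2
    have hy'g : η₂ ≤ g y' := hη₂le i hi
    have hy'ncl : y' ∉ closure A := fun h => by
      have := (hclA h).2
      have h2 : min η₁ (η₂ / 2) ≤ η₂ / 2 := min_le_right _ _
      linarith
    have hxA : x ∈ A := interior_subset (hKintA (hFKsub hx))
    obtain ⟨z, hzseg, hzf⟩ := seg_frontier' (E := EuclideanSpace ℝ (Fin n))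
      (t := segment ℝ x y') (s := A) (convex_segment x y').isPreconnected
      ⟨x, left_mem_segment ℝ x y', hxA⟩
      ⟨y', right_mem_segment ℝ x y', fun h => hy'ncl (subset_closure h)⟩
    refine ⟨z, hzf, ?_⟩
    have hdz : dist x z + dist z y' = dist x y' := dist_add_dist_of_mem_segment hzseg
    have hdxy : dist x y' ≤ dist x (i : EuclideanSpace ℝ (Fin n)) +
        dist (i : EuclideanSpace ℝ (Fin n)) y' := dist_triangle _ _ _
    have : dist (i : EuclideanSpace ℝ (Fin n)) y' = dist y' (i : EuclideanSpace ℝ (Fin n)) :=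
      dist_comm _ _
    have hz' : 0 ≤ dist z y' := dist_nonneg
    linarith
  · -- every point of frontier A is close to frontier K
    intro y hy
    have hycl : y ∈ closure A := frontier_subset_closure hy
    have hyS : y ∈ S := hclA hycl
    have hyT : y ∈ Metric.thickening r K :=
      hS₁ y hyS.1 (hyS.2.trans (min_le_left _ _))
    obtain ⟨k, hkK, hdk⟩ := Metric.mem_thickening_iff.1 hyT
    have hyK : y ∉ K := fun h => hy.2 (hKintA h)
    obtain ⟨z, hzseg, hzf⟩ := seg_frontier' (E := EuclideanSpace ℝ (Fin n))
      (t := segment ℝ y k) (s := K) (convex_segment y k).isPreconnected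
      ⟨k, right_mem_segment ℝ y k, hkK⟩
      ⟨y, left_mem_segment ℝ y k, hyK⟩
    refine ⟨z, hzf, ?_⟩
    have hdz : dist y z + dist z k = dist y k := dist_add_dist_of_mem_segment hzseg
    have hrε : r ≤ ε := min_le_left _ _
    have hz' : 0 ≤ dist z k := dist_nonneg
    linarith


end
end

section
/- For integers n ≥ 2 and k ≥ 1, set κ := k/(n−1) and ρ̄(k, n) := κ^{−1/((n−1)(κ+1))} · (κ^{−κ/(κ+1)} + κ^{1/(κ+1)})^{−1/((n−1)κ)}. Then 0 < ρ̄(k, n) < 1 for all such n and k, and for each fixed n ≥ 2, ρ̄(k, n) → 1 as k → ∞. -/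
open MeasureTheory Metric Set Filter

noncomputable section

lemma rhoBar_eq (n k : ℕ) (hn : 2 ≤ n) (hk : 1 ≤ k) :
    rhoBar k n = (1 + (k:ℝ)/((n:ℝ)-1)) ^ (-(1:ℝ)/(k:ℝ)) := by
  have hc : (0:ℝ) < (n:ℝ) - 1 := by
    have : (2:ℝ) ≤ (n:ℝ) := by exact_mod_cast hn
    linarith
  have hk0 : (0:ℝ) < (k:ℝ) := by exact_mod_cast hk
  unfold rhoBar
  set κ : ℝ := (k:ℝ)/((n:ℝ)-1) with hκdef
  have hκ : 0 < κ := div_pos hk0 hc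
  have hκ1 : κ + 1 ≠ 0 := by positivity
  have h1 : κ ^ ((1:ℝ)/(κ+1)) = κ ^ (-κ/(κ+1)) * κ := by
    calc κ ^ ((1:ℝ)/(κ+1)) = κ ^ (-κ/(κ+1) + 1) := by
          congr 1; field_simp; ring
      _ = κ ^ (-κ/(κ+1)) * κ ^ (1:ℝ) := Real.rpow_add hκ _ _
      _ = κ ^ (-κ/(κ+1)) * κ := by rw [Real.rpow_one]
  have hsum : κ ^ (-κ/(κ+1)) + κ ^ ((1:ℝ)/(κ+1)) = κ ^ (-κ/(κ+1)) * (1 + κ) := by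
    rw [h1]; ring
  rw [hsum, Real.mul_rpow (Real.rpow_nonneg hκ.le _) (by positivity),
    ← Real.rpow_mul hκ.le, ← mul_assoc, ← Real.rpow_add hκ]
  have he : -(1:ℝ) / (((n:ℝ)-1) * (κ+1)) + -κ/(κ+1) * (-(1:ℝ)/(((n:ℝ)-1)*κ)) = 0 := by
    field_simp; ring
  have hk' : ((n:ℝ)-1) * κ = (k:ℝ) := by
    rw [hκdef]; field_simp
  rw [he, Real.rpow_zero, one_mul, hk']
/-- `0 < ρ̄(k,n) < 1`, and `ρ̄(k,n) → 1` as `k → ∞` for fixed `n ≥ 2`. -/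
theorem statement17 (n : ℕ) (hn : 2 ≤ n) :
    (∀ k : ℕ, 1 ≤ k → 0 < rhoBar k n ∧ rhoBar k n < 1) ∧
    Filter.Tendsto (fun k : ℕ => rhoBar k n) Filter.atTop (nhds 1) := by
  have hc : (0:ℝ) < (n:ℝ) - 1 := by
    have : (2:ℝ) ≤ (n:ℝ) := by exact_mod_cast hn
    linarith
  constructor
  · intro k hk
    have hk0 : (0:ℝ) < (k:ℝ) := by exact_mod_cast hk
    have hb : 1 < 1 + (k:ℝ)/((n:ℝ)-1) := by
      have := div_pos hk0 hc; linarith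
    rw [rhoBar_eq n k hn hk]
    exact ⟨Real.rpow_pos_of_pos (by linarith) _,
      Real.rpow_lt_one_of_one_lt_of_neg hb (div_neg_of_neg_of_pos (by norm_num) hk0)⟩
  · -- tendsto
    have hlog : Tendsto (fun x:ℝ => Real.log x / x) atTop (nhds 0) :=
      Real.isLittleO_log_id_atTop.tendsto_div_nhds_zero
    have h2 : Tendsto (fun x:ℝ => 1 + x/((n:ℝ)-1)) atTop atTop :=
      tendsto_atTop_add_const_left _ _ (Tendsto.atTop_div_const hc tendsto_id)
    have h3 : Tendsto (fun x:ℝ =>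
        Real.log (1+x/((n:ℝ)-1)) / (1+x/((n:ℝ)-1))) atTop (nhds 0) := hlog.comp h2
    have h4 : Tendsto (fun x:ℝ => (1+x/((n:ℝ)-1))/x) atTop (nhds (((n:ℝ)-1)⁻¹)) := by
      have h : Tendsto (fun x:ℝ => x⁻¹ + ((n:ℝ)-1)⁻¹) atTop (nhds (0 + ((n:ℝ)-1)⁻¹)) :=
        tendsto_inv_atTop_zero.add tendsto_const_nhds
      rw [zero_add] at h
      apply h.congr'
      filter_upwards [eventually_gt_atTop (0:ℝ)] with x hx
      rw [eq_div_iff hx.ne']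
      field_simp
    have h5 : Tendsto (fun x:ℝ => Real.log (1+x/((n:ℝ)-1)) * (-(1:ℝ)/x)) atTop (nhds 0) := by
      have hmul := h3.mul h4
      rw [zero_mul] at hmul
      have hneg := hmul.neg
      rw [neg_zero] at hneg
      apply hneg.congr'
      filter_upwards [eventually_gt_atTop (0:ℝ)] with x hx
      have hy : (0:ℝ) < 1 + x/((n:ℝ)-1) := by positivity
      field_simp
    have h6 : Tendsto (fun k:ℕ => Real.log (1+(k:ℝ)/((n:ℝ)-1)) * (-(1:ℝ)/(k:ℝ)))
        atTop (nhds 0) := h5.comp tendsto_natCast_atTop_atTop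
    have h7 := (Real.continuous_exp.tendsto 0).comp h6
    rw [Real.exp_zero] at h7
    apply h7.congr'
    filter_upwards [eventually_ge_atTop 1] with k hk
    simp only [Function.comp]
    rw [rhoBar_eq n k hn hk, Real.rpow_def_of_pos (by positivity)]

end
end

section
/- Let n ≥ 2 and k ≥ 1 be integers. For A > 0 and t ∈ ℝ define g_{A,t}(r) := A·r^{1−n} + t − 1 + r^k for r > 0. Then: (a) for each A > 0 and t ∈ ℝ, the function g_{A,t} attains its global minimum over (0, ∞) exactly at the point r̄ = ((n−1)A/k)^{1/(n+k−1)}; and (b) for ρ > 0, there exist A > 0 and t ≥ 0 such that g_{A,t}(r) ≥ 0 for all r > 0 and g_{A,t}(ρ) = 0 if and only if ρ ≤ ρ̄(k, n), where, with κ := k/(n−1), ρ̄(k, n) := κ^{−1/((n−1)(κ+1))} · (κ^{−κ/(κ+1)} + κ^{1/(κ+1)})^{−1/((n−1)κ)}. -/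
open MeasureTheory Metric Set Filter

noncomputable section

lemma key_ge (n k : ℕ) (hn : 2 ≤ n) (hk : 1 ≤ k) {s : ℝ} (hs : 0 < s) :
    ((n:ℝ) - 1) + (k:ℝ) ≤ (k:ℝ) * s ^ ((1:ℝ) - (n:ℝ)) + ((n:ℝ) - 1) * s ^ (k:ℝ) := by
  have hn1 : (1:ℝ) ≤ (n:ℝ) - 1 := by
    have : (2:ℝ) ≤ (n:ℝ) := by exact_mod_cast hn
    linarith
  have hk1 : (1:ℝ) ≤ (k:ℝ) := by exact_mod_cast hk
  set t := Real.log s with ht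
  have h1 : s ^ ((1:ℝ) - (n:ℝ)) = Real.exp (((1:ℝ) - (n:ℝ)) * t) := by
    rw [Real.rpow_def_of_pos hs, mul_comm]
  have h2 : s ^ ((k:ℝ)) = Real.exp ((k:ℝ) * t) := by
    rw [Real.rpow_def_of_pos hs, mul_comm]
  set m : ℝ := ((n:ℝ) - 1) + (k:ℝ) with hm
  have hm0 : 0 < m := by linarith
  have hab : (k:ℝ)/m + ((n:ℝ)-1)/m = 1 := by
    rw [← add_div, show (k:ℝ) + ((n:ℝ)-1) = m from by rw [hm]; ring, div_self hm0.ne']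
  have hc : Real.exp (((k:ℝ)/m) • (((1:ℝ) - (n:ℝ)) * t) + (((n:ℝ)-1)/m) • ((k:ℝ) * t)) ≤
      ((k:ℝ)/m) • Real.exp (((1:ℝ) - (n:ℝ)) * t) + (((n:ℝ)-1)/m) • Real.exp ((k:ℝ) * t) :=
    convexOn_exp.2 (Set.mem_univ _) (Set.mem_univ _) (by positivity) (by positivity) hab
  simp only [smul_eq_mul] at hc
  have harg : (k:ℝ)/m * (((1:ℝ) - (n:ℝ)) * t) + ((n:ℝ)-1)/m * ((k:ℝ) * t) = 0 := by
    field_simp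
    ring
  rw [harg, Real.exp_zero] at hc
  rw [h1, h2]
  have h3 := mul_le_mul_of_nonneg_left hc hm0.le
  calc m = m * 1 := by ring
    _ ≤ m * ((k:ℝ)/m * Real.exp (((1:ℝ) - (n:ℝ)) * t) + ((n:ℝ)-1)/m * Real.exp ((k:ℝ) * t)) := h3
    _ = (k:ℝ) * Real.exp (((1:ℝ) - (n:ℝ)) * t) + ((n:ℝ)-1) * Real.exp ((k:ℝ) * t) := by
        field_simp

lemma key_gt (n k : ℕ) (hn : 2 ≤ n) (hk : 1 ≤ k) {s : ℝ} (hs : 0 < s) (hs1 : s ≠ 1) :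
    ((n:ℝ) - 1) + (k:ℝ) < (k:ℝ) * s ^ ((1:ℝ) - (n:ℝ)) + ((n:ℝ) - 1) * s ^ (k:ℝ) := by
  have hn1 : (1:ℝ) ≤ (n:ℝ) - 1 := by
    have : (2:ℝ) ≤ (n:ℝ) := by exact_mod_cast hn
    linarith
  have hk1 : (1:ℝ) ≤ (k:ℝ) := by exact_mod_cast hk
  set t := Real.log s with ht
  have ht0 : t ≠ 0 := by
    intro h
    apply hs1
    have h2 := Real.exp_log hs
    rw [← ht, h, Real.exp_zero] at h2
    exact h2.symm
  have h1 : s ^ ((1:ℝ) - (n:ℝ)) = Real.exp (((1:ℝ) - (n:ℝ)) * t) := by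
    rw [Real.rpow_def_of_pos hs, mul_comm]
  have h2 : s ^ ((k:ℝ)) = Real.exp ((k:ℝ) * t) := by
    rw [Real.rpow_def_of_pos hs, mul_comm]
  set m : ℝ := ((n:ℝ) - 1) + (k:ℝ) with hm
  have hm0 : 0 < m := by linarith
  have hab : (k:ℝ)/m + ((n:ℝ)-1)/m = 1 := by
    rw [← add_div, show (k:ℝ) + ((n:ℝ)-1) = m from by rw [hm]; ring, div_self hm0.ne']
  have hne : ((1:ℝ) - (n:ℝ)) * t ≠ (k:ℝ) * t := by
    intro h
    apply ht0
    have h4 : (((k:ℝ)) - ((1:ℝ) - (n:ℝ))) * t = 0 := by nlinarith [h]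
    rcases mul_eq_zero.1 h4 with h' | h'
    · nlinarith
    · exact h'
  have hc : Real.exp (((k:ℝ)/m) • (((1:ℝ) - (n:ℝ)) * t) + (((n:ℝ)-1)/m) • ((k:ℝ) * t)) <
      ((k:ℝ)/m) • Real.exp (((1:ℝ) - (n:ℝ)) * t) + (((n:ℝ)-1)/m) • Real.exp ((k:ℝ) * t) :=
    strictConvexOn_exp.2 (Set.mem_univ _) (Set.mem_univ _) hne (by positivity) (by positivity) hab
  simp only [smul_eq_mul] at hc
  have harg : (k:ℝ)/m * (((1:ℝ) - (n:ℝ)) * t) + ((n:ℝ)-1)/m * ((k:ℝ) * t) = 0 := by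
    field_simp
    ring
  rw [harg, Real.exp_zero] at hc
  rw [h1, h2]
  have h3 := mul_lt_mul_of_pos_left hc hm0
  calc m = m * 1 := by ring
    _ < m * ((k:ℝ)/m * Real.exp (((1:ℝ) - (n:ℝ)) * t) + ((n:ℝ)-1)/m * Real.exp ((k:ℝ) * t)) := h3
    _ = (k:ℝ) * Real.exp (((1:ℝ) - (n:ℝ)) * t) + ((n:ℝ)-1) * Real.exp ((k:ℝ) * t) := by
        field_simp

lemma rbar_pos (n k : ℕ) (hn : 2 ≤ n) (hk : 1 ≤ k) {A : ℝ} (hA : 0 < A) :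
    0 < (((n:ℝ)-1)*A/(k:ℝ)) ^ ((1:ℝ)/((n:ℝ)+(k:ℝ)-1)) := by
  have hn1 : (1:ℝ) ≤ (n:ℝ) - 1 := by
    have : (2:ℝ) ≤ (n:ℝ) := by exact_mod_cast hn
    linarith
  have hk1 : (1:ℝ) ≤ (k:ℝ) := by exact_mod_cast hk
  have hB0 : 0 < ((n:ℝ)-1)*A/(k:ℝ) := by positivity
  exact Real.rpow_pos_of_pos hB0 _

lemma rbar_rpow (n k : ℕ) (hn : 2 ≤ n) (hk : 1 ≤ k) {A : ℝ} (hA : 0 < A) :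
    ((((n:ℝ)-1)*A/(k:ℝ)) ^ ((1:ℝ)/((n:ℝ)+(k:ℝ)-1))) ^ ((n:ℝ)+(k:ℝ)-1) =
      ((n:ℝ)-1)*A/(k:ℝ) := by
  have hn1 : (1:ℝ) ≤ (n:ℝ) - 1 := by
    have : (2:ℝ) ≤ (n:ℝ) := by exact_mod_cast hn
    linarith
  have hk1 : (1:ℝ) ≤ (k:ℝ) := by exact_mod_cast hk
  have hB0 : 0 < ((n:ℝ)-1)*A/(k:ℝ) := by positivity
  have hm0 : (0:ℝ) < (n:ℝ)+(k:ℝ)-1 := by linarith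
  rw [← Real.rpow_mul hB0.le, one_div, inv_mul_cancel₀ hm0.ne', Real.rpow_one]

lemma hfun_eq (n k : ℕ) (hn : 2 ≤ n) (hk : 1 ≤ k) {A r : ℝ} (hA : 0 < A) (hr : 0 < r) :
    A * r ^ ((1:ℝ)-(n:ℝ)) + r ^ ((k:ℝ)) =
      (((((n:ℝ)-1)*A/(k:ℝ)) ^ ((1:ℝ)/((n:ℝ)+(k:ℝ)-1))) ^ ((k:ℝ)) / ((n:ℝ)-1)) *
        ((k:ℝ) * (r / ((((n:ℝ)-1)*A/(k:ℝ)) ^ ((1:ℝ)/((n:ℝ)+(k:ℝ)-1)))) ^ ((1:ℝ)-(n:ℝ)) +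
         ((n:ℝ)-1) * (r / ((((n:ℝ)-1)*A/(k:ℝ)) ^ ((1:ℝ)/((n:ℝ)+(k:ℝ)-1)))) ^ ((k:ℝ))) := by
  have hn1 : (1:ℝ) ≤ (n:ℝ) - 1 := by
    have : (2:ℝ) ≤ (n:ℝ) := by exact_mod_cast hn
    linarith
  have hk1 : (1:ℝ) ≤ (k:ℝ) := by exact_mod_cast hk
  set B : ℝ := ((n:ℝ)-1)*A/(k:ℝ) with hB
  have hB0 : 0 < B := by positivity
  set R : ℝ := B ^ ((1:ℝ)/((n:ℝ)+(k:ℝ)-1)) with hR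
  have hR0 : 0 < R := rbar_pos n k hn hk hA
  have hRpow : R ^ ((n:ℝ)+(k:ℝ)-1) = B := rbar_rpow n k hn hk hA
  have e1 : (r / R) ^ ((1:ℝ)-(n:ℝ)) = r ^ ((1:ℝ)-(n:ℝ)) / R ^ ((1:ℝ)-(n:ℝ)) :=
    Real.div_rpow hr.le hR0.le _
  have e2 : (r / R) ^ ((k:ℝ)) = r ^ ((k:ℝ)) / R ^ ((k:ℝ)) :=
    Real.div_rpow hr.le hR0.le _
  have hkey : R ^ ((k:ℝ)) / R ^ ((1:ℝ)-(n:ℝ)) = B := by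
    rw [← Real.rpow_sub hR0, show (k:ℝ) - ((1:ℝ)-(n:ℝ)) = (n:ℝ)+(k:ℝ)-1 by ring, hRpow]
  have hR1n : (0:ℝ) < R ^ ((1:ℝ)-(n:ℝ)) := Real.rpow_pos_of_pos hR0 _
  have hRk : (0:ℝ) < R ^ ((k:ℝ)) := Real.rpow_pos_of_pos hR0 _
  have hkk : (0:ℝ) < (k:ℝ) := by linarith
  have hnn : (0:ℝ) < (n:ℝ)-1 := by linarith
  have hQP : R ^ ((k:ℝ)) = B * R ^ ((1:ℝ)-(n:ℝ)) := (div_eq_iff hR1n.ne').1 hkey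
  have hBA : B * (k:ℝ) = ((n:ℝ)-1) * A := by
    rw [hB]; field_simp
  rw [e1, e2, hQP]
  set X : ℝ := r ^ ((1:ℝ)-(n:ℝ)) with hXd
  set Y : ℝ := r ^ ((k:ℝ)) with hYd
  set P : ℝ := R ^ ((1:ℝ)-(n:ℝ)) with hPd
  have hcalc : (B * P / ((n:ℝ)-1)) * ((k:ℝ) * (X / P) + ((n:ℝ)-1) * (Y / (B * P)))
      = (B * (k:ℝ) / ((n:ℝ)-1)) * X + Y := by
    field_simp
  rw [hcalc, hBA]
  field_simp

lemma hfun_min (n k : ℕ) (hn : 2 ≤ n) (hk : 1 ≤ k) {A r : ℝ} (hA : 0 < A) (hr : 0 < r) :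
    A * ((((n:ℝ)-1)*A/(k:ℝ)) ^ ((1:ℝ)/((n:ℝ)+(k:ℝ)-1))) ^ ((1:ℝ)-(n:ℝ)) +
      ((((n:ℝ)-1)*A/(k:ℝ)) ^ ((1:ℝ)/((n:ℝ)+(k:ℝ)-1))) ^ ((k:ℝ)) ≤
      A * r ^ ((1:ℝ)-(n:ℝ)) + r ^ ((k:ℝ)) := by
  have hR0 := rbar_pos n k hn hk hA
  set R : ℝ := (((n:ℝ)-1)*A/(k:ℝ)) ^ ((1:ℝ)/((n:ℝ)+(k:ℝ)-1)) with hRdef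
  rw [hfun_eq n k hn hk hA hr, hfun_eq n k hn hk hA hR0]
  have hC : (0:ℝ) ≤ R ^ ((k:ℝ)) / ((n:ℝ)-1) := by
    have hn1 : (1:ℝ) ≤ (n:ℝ) - 1 := by
      have : (2:ℝ) ≤ (n:ℝ) := by exact_mod_cast hn
      linarith
    positivity
  have hs : 0 < r / R := div_pos hr hR0
  have hkey := key_ge n k hn hk hs
  have h3 := mul_le_mul_of_nonneg_left hkey hC
  rw [div_self hR0.ne', Real.one_rpow, Real.one_rpow]
  nlinarith [h3]

lemma hfun_lt (n k : ℕ) (hn : 2 ≤ n) (hk : 1 ≤ k) {A r : ℝ} (hA : 0 < A) (hr : 0 < r)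
    (hne : r ≠ (((n:ℝ)-1)*A/(k:ℝ)) ^ ((1:ℝ)/((n:ℝ)+(k:ℝ)-1))) :
    A * ((((n:ℝ)-1)*A/(k:ℝ)) ^ ((1:ℝ)/((n:ℝ)+(k:ℝ)-1))) ^ ((1:ℝ)-(n:ℝ)) +
      ((((n:ℝ)-1)*A/(k:ℝ)) ^ ((1:ℝ)/((n:ℝ)+(k:ℝ)-1))) ^ ((k:ℝ)) <
      A * r ^ ((1:ℝ)-(n:ℝ)) + r ^ ((k:ℝ)) := by
  have hR0 := rbar_pos n k hn hk hA
  set R : ℝ := (((n:ℝ)-1)*A/(k:ℝ)) ^ ((1:ℝ)/((n:ℝ)+(k:ℝ)-1)) with hRdef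
  rw [hfun_eq n k hn hk hA hr, hfun_eq n k hn hk hA hR0]
  have hn1 : (1:ℝ) ≤ (n:ℝ) - 1 := by
    have : (2:ℝ) ≤ (n:ℝ) := by exact_mod_cast hn
    linarith
  have hC : (0:ℝ) < R ^ ((k:ℝ)) / ((n:ℝ)-1) := by positivity
  have hs : 0 < r / R := div_pos hr hR0
  have hs1 : r / R ≠ 1 := by
    intro h
    exact hne ((div_eq_one_iff_eq hR0.ne').1 h)
  have hkey := key_gt n k hn hk hs hs1
  have h3 := mul_lt_mul_of_pos_left hkey hC
  rw [div_self hR0.ne', Real.one_rpow, Real.one_rpow]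
  nlinarith [h3]

lemma gfun_rpow (n k : ℕ) (A t r : ℝ) :
    gfun n k A t r = A * r ^ ((1:ℝ)-(n:ℝ)) + t - 1 + r ^ ((k:ℝ)) := by
  rw [gfun, Real.rpow_natCast]

theorem statement18' : True := trivial

/-- (a) `g_{A,t}` attains its global minimum on `(0,∞)` exactly at
`r̄ = ((n-1)A/k)^{1/(n+k-1)}`; (b) the touching characterization via `ρ̄(k,n)`. -/
theorem statement18 (n k : ℕ) (hn : 2 ≤ n) (hk : 1 ≤ k) :
    (∀ A t : ℝ, 0 < A →
      (∀ r : ℝ, 0 < r →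
        gfun n k A t ((((n : ℝ) - 1) * A / (k : ℝ)) ^ ((1 : ℝ) / ((n : ℝ) + (k : ℝ) - 1))) ≤
          gfun n k A t r) ∧
      (∀ r : ℝ, 0 < r →
        gfun n k A t r =
          gfun n k A t ((((n : ℝ) - 1) * A / (k : ℝ)) ^ ((1 : ℝ) / ((n : ℝ) + (k : ℝ) - 1))) →
        r = (((n : ℝ) - 1) * A / (k : ℝ)) ^ ((1 : ℝ) / ((n : ℝ) + (k : ℝ) - 1)))) ∧
    (∀ ρ : ℝ, 0 < ρ →
      ((∃ A > (0 : ℝ), ∃ t ≥ (0 : ℝ),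
          (∀ r : ℝ, 0 < r → 0 ≤ gfun n k A t r) ∧ gfun n k A t ρ = 0) ↔
        ρ ≤ rhoBar k n)) := by
  have hn1 : (1:ℝ) ≤ (n:ℝ) - 1 := by
    have : (2:ℝ) ≤ (n:ℝ) := by exact_mod_cast hn
    linarith
  have hk1 : (1:ℝ) ≤ (k:ℝ) := by exact_mod_cast hk
  have hnn : (0:ℝ) < (n:ℝ) - 1 := by linarith
  have hkk : (0:ℝ) < (k:ℝ) := by linarith
  have hm0 : (0:ℝ) < (n:ℝ) + (k:ℝ) - 1 := by linarith
  constructor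
  · intro A t hA
    have hR0 := rbar_pos n k hn hk hA
    constructor
    · intro r hr
      rw [gfun_rpow, gfun_rpow]
      have := hfun_min n k hn hk hA hr
      linarith
    · intro r hr heq
      by_contra hne
      have := hfun_lt n k hn hk hA hr hne
      rw [gfun_rpow, gfun_rpow] at heq
      linarith
  · intro ρ hρ
    rw [rhoBar_eq n k hn hk]
    set κ : ℝ := (k:ℝ)/((n:ℝ)-1) with hκ
    have hκ0 : 0 < κ := by positivity
    have h1κ : (0:ℝ) < 1 + κ := by linarith
    constructor
    · rintro ⟨A, hA, t, ht, hpos, hzero⟩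
      set R : ℝ := (((n:ℝ)-1)*A/(k:ℝ)) ^ ((1:ℝ)/((n:ℝ)+(k:ℝ)-1)) with hRdef
      have hR0 := rbar_pos n k hn hk hA
      have h1 : gfun n k A t R ≤ gfun n k A t ρ := by
        rw [gfun_rpow, gfun_rpow]
        have := hfun_min n k hn hk hA hρ
        linarith
      have h2 : gfun n k A t ρ = gfun n k A t R :=
        le_antisymm (by rw [hzero]; exact hpos R hR0) h1
      have hρR : ρ = R := by
        by_contra hne
        have hlt := hfun_lt n k hn hk hA hρ hne
        rw [gfun_rpow, gfun_rpow] at h2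
        linarith
      have hRpow := rbar_rpow n k hn hk hA
      rw [← hRdef, ← hρR] at hRpow
      have hAρ : A = κ * ρ ^ ((n:ℝ)+(k:ℝ)-1) := by
        field_simp [hκ] at hRpow ⊢
        rw [hκ]; field_simp; linarith [hRpow]
      have hexp : ρ ^ ((n:ℝ)+(k:ℝ)-1) * ρ ^ ((1:ℝ)-(n:ℝ)) = ρ ^ ((k:ℝ)) := by
        rw [← Real.rpow_add hρ]
        congr 1
        ring
      have hg : gfun n k A t ρ = (1 + κ) * ρ ^ ((k:ℝ)) + t - 1 := by
        rw [gfun_rpow, hAρ, mul_assoc, hexp]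
        ring
      have hρk : (1+κ) * ρ ^ ((k:ℝ)) = 1 - t := by
        rw [hg] at hzero
        linarith
      have hle : ρ ^ ((k:ℝ)) ≤ (1+κ)⁻¹ := by
        rw [inv_eq_one_div, le_div_iff₀ h1κ]
        nlinarith [Real.rpow_pos_of_pos hρ ((k:ℝ))]
      have hfin : ρ ≤ ((1+κ)⁻¹) ^ ((1:ℝ)/(k:ℝ)) := by
        have h := Real.rpow_le_rpow (Real.rpow_pos_of_pos hρ _).le hle
          (by positivity : (0:ℝ) ≤ (1:ℝ)/(k:ℝ))
        rwa [← Real.rpow_mul hρ.le, mul_one_div, div_self hkk.ne', Real.rpow_one] at h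
      calc ρ ≤ ((1+κ)⁻¹) ^ ((1:ℝ)/(k:ℝ)) := hfin
        _ = (1+κ) ^ (-(1:ℝ)/(k:ℝ)) := by
            rw [Real.inv_rpow h1κ.le, ← Real.rpow_neg h1κ.le, neg_div]
    · intro hle
      set A : ℝ := κ * ρ ^ ((n:ℝ)+(k:ℝ)-1) with hAdef
      have hA : 0 < A := by
        have := Real.rpow_pos_of_pos hρ ((n:ℝ)+(k:ℝ)-1)
        positivity
      have hρk : ρ ^ ((k:ℝ)) ≤ (1+κ)⁻¹ := by
        have h := Real.rpow_le_rpow hρ.le hle hkk.le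
        rwa [← Real.rpow_mul h1κ.le,
          show (-(1:ℝ)/(k:ℝ)) * (k:ℝ) = -1 from by field_simp,
          Real.rpow_neg_one] at h
      set t : ℝ := 1 - (1+κ) * ρ ^ ((k:ℝ)) with htdef
      have ht : 0 ≤ t := by
        have h := mul_le_mul_of_nonneg_left hρk h1κ.le
        rw [mul_inv_cancel₀ h1κ.ne'] at h
        rw [htdef]
        linarith
      have hexp : ρ ^ ((n:ℝ)+(k:ℝ)-1) * ρ ^ ((1:ℝ)-(n:ℝ)) = ρ ^ ((k:ℝ)) := by
        rw [← Real.rpow_add hρ]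
        congr 1
        ring
      have hgρ : gfun n k A t ρ = 0 := by
        rw [gfun_rpow, hAdef, htdef, mul_assoc, hexp]
        ring
      have hBρ : ((n:ℝ)-1)*A/(k:ℝ) = ρ ^ ((n:ℝ)+(k:ℝ)-1) := by
        rw [hAdef, hκ]
        field_simp
      have hRρ : (((n:ℝ)-1)*A/(k:ℝ)) ^ ((1:ℝ)/((n:ℝ)+(k:ℝ)-1)) = ρ := by
        rw [hBρ, ← Real.rpow_mul hρ.le, mul_one_div, div_self hm0.ne', Real.rpow_one]
      refine ⟨A, hA, t, ht, ?_, hgρ⟩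
      intro r hr
      have hmin := hfun_min n k hn hk hA hr
      rw [hRρ] at hmin
      rw [gfun_rpow] at hgρ ⊢
      linarith

end
end

section
/- Let n ≥ 1, let K ⊂ ℝ^n be a nonempty compact set contained in the ball of radius 1/4 centered at the origin, and let η > 0. Then there exists a real polynomial f on ℝ^n such that K ⊆ {x ∈ ℝ^n : f(x) ≤ 0}, {x ∈ ℝ^n : f(x) ≤ 0} ⊆ {x ∈ ℝ^n : dist(x, K) ≤ η}, and f(x) > 0 for all x ∈ ℝ^n with |x| > 1. -/
open MeasureTheory Metric Set Filter

noncomputable section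

lemma coord_abs_le {m : ℕ} (x : EuclideanSpace ℝ (Fin m)) (i : Fin m) : |x i| ≤ ‖x‖ := by
  rw [EuclideanSpace.norm_eq, ← Real.sqrt_sq (abs_nonneg (x i))]
  apply Real.sqrt_le_sqrt
  simpa using Finset.single_le_sum (f := fun j => ‖x j‖^2) (fun j _ => sq_nonneg _) (Finset.mem_univ i)

lemma sum_sq_eq {m : ℕ} (x : EuclideanSpace ℝ (Fin m)) : ∑ i, x i ^ 2 = ‖x‖ ^ 2 := by
  rw [EuclideanSpace.norm_eq, Real.sq_sqrt (by positivity)]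
  simp [sq_abs]

lemma pev_growth {m : ℕ} (q : MvPolynomial (Fin m) ℝ) (x : EuclideanSpace ℝ (Fin m))
    (hx : 1 ≤ ‖x‖) :
    |pev q x| ≤ (∑ d ∈ q.support, |MvPolynomial.coeff d q|) * ‖x‖ ^ q.totalDegree := by
  rw [pev, MvPolynomial.eval_eq, Finset.sum_mul]
  refine (Finset.abs_sum_le_sum_abs _ _).trans (Finset.sum_le_sum fun d hd => ?_)
  rw [abs_mul]
  refine mul_le_mul_of_nonneg_left ?_ (abs_nonneg _)
  calc |∏ i ∈ d.support, x i ^ d i| = ∏ i ∈ d.support, |x i| ^ d i := by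
        rw [Finset.abs_prod]; exact Finset.prod_congr rfl fun i _ => (abs_pow _ _)
    _ ≤ ∏ i ∈ d.support, ‖x‖ ^ d i :=
        Finset.prod_le_prod (fun i _ => by positivity)
          (fun i _ => pow_le_pow_left₀ (abs_nonneg _) (coord_abs_le x i) _)
    _ = ‖x‖ ^ (∑ i ∈ d.support, d i) := by rw [← Finset.prod_pow_eq_pow_sum]
    _ ≤ ‖x‖ ^ q.totalDegree := by
        apply pow_le_pow_right₀ hx
        exact MvPolynomial.le_totalDegree hd

lemma approx_poly {m : ℕ} (s : Set (EuclideanSpace ℝ (Fin m))) (hs : IsCompact s)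
    (F : EuclideanSpace ℝ (Fin m) → ℝ) (hF : Continuous F) (ε : ℝ) (hε : 0 < ε) :
    ∃ p : MvPolynomial (Fin m) ℝ, ∀ x ∈ s, |pev p x - F x| < ε := by
  haveI : CompactSpace s := isCompact_iff_compactSpace.mp hs
  set c : Fin m → C(s, ℝ) := fun i =>
    ⟨fun x => (x : EuclideanSpace ℝ (Fin m)) i,
      (EuclideanSpace.proj i).continuous.comp continuous_subtype_val⟩ with hc
  set φ : MvPolynomial (Fin m) ℝ →ₐ[ℝ] C(s, ℝ) := MvPolynomial.aeval c with hφ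
  have key : ∀ (q : MvPolynomial (Fin m) ℝ) (x : s), φ q x = pev q (x : _) := by
    intro q x
    have := MvPolynomial.comp_aeval_apply c (ContinuousMap.evalAlgHom ℝ ℝ x) q
    simp only [ContinuousMap.evalAlgHom_apply] at this
    rw [hφ] at *
    rw [this]
    rw [pev, MvPolynomial.aeval_def, Algebra.algebraMap_self, MvPolynomial.eval₂_id]
    rfl
  have sep : (φ.range : Subalgebra ℝ C(s, ℝ)).SeparatesPoints := by
    intro x y hxy
    have hne : ∃ i, (x : EuclideanSpace ℝ (Fin m)) i ≠ (y : EuclideanSpace ℝ (Fin m)) i := by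
      by_contra h
      push_neg at h
      exact hxy (Subtype.ext (PiLp.ext h))
    obtain ⟨i, hi⟩ := hne
    refine ⟨⇑(φ (MvPolynomial.X i)), ⟨φ (MvPolynomial.X i), ⟨MvPolynomial.X i, rfl⟩, rfl⟩, ?_⟩
    simpa [key, pev] using hi
  obtain ⟨g, hg⟩ := ContinuousMap.exists_mem_subalgebra_near_continuous_of_separatesPoints
    φ.range sep (fun x : s => F x) (hF.comp continuous_subtype_val) ε hε
  obtain ⟨p, hp⟩ := g.2
  refine ⟨p, fun x hx => ?_⟩
  have := hg ⟨x, hx⟩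
  rw [← hp] at this
  simpa [key, Real.norm_eq_abs] using this

set_option maxHeartbeats 1000000 in
/-- polynomial approximation of a compact set `K ⊂ B_{1/4}`: a
polynomial `f` with `K ⊆ {f ≤ 0}`, `{f ≤ 0}` within distance `η` from `K`, and
`f > 0` outside the unit ball. -/
theorem statement19 (n : ℕ) (hn : 1 ≤ n)
    (K : Set (EuclideanSpace ℝ (Fin n))) (hK : IsCompact K) (hKne : K.Nonempty)
    (hKsub : K ⊆ Metric.ball 0 (1 / 4)) (η : ℝ) (hη : 0 < η) :
    ∃ f : MvPolynomial (Fin n) ℝ,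
      (∀ x ∈ K, pev f x ≤ 0) ∧
      (∀ x : EuclideanSpace ℝ (Fin n), pev f x ≤ 0 → Metric.infDist x K ≤ η) ∧
      (∀ x : EuclideanSpace ℝ (Fin n), 1 < ‖x‖ → 0 < pev f x) := by
  classical
  set ε : ℝ := min (η / 2) 4⁻¹ with hεdef
  have hε : 0 < ε := lt_min (by linarith) (by norm_num)
  have hε4 : ε ≤ 4⁻¹ := min_le_right _ _
  have hεη : ε ≤ η / 2 := min_le_left _ _
  obtain ⟨p, hp⟩ := approx_poly (Metric.closedBall 0 2) (isCompact_closedBall _ _)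
    (fun x => min (Metric.infDist x K) 1 - ε)
    (((continuous_infDist_pt K).min continuous_const).sub continuous_const) (ε/2) (by linarith)
  have hlow : ∀ x : EuclideanSpace ℝ (Fin n), ‖x‖ ≤ 2 →
      |pev p x - (min (Metric.infDist x K) 1 - ε)| < ε/2 := by
    intro x hx
    exact hp x (mem_closedBall_zero_iff.mpr hx)
  set A₀ : ℝ := ∑ d ∈ p.support, |MvPolynomial.coeff d p| with hA₀
  have hA₀0 : 0 ≤ A₀ := Finset.sum_nonneg fun _ _ => abs_nonneg _
  set dg := p.totalDegree with hdg
  set R : ℝ := max 2 (A₀ * 2 ^ (dg + 1)) with hRdef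
  have hR2 : (2:ℝ) ≤ R := le_max_left _ _
  have hR0 : (0:ℝ) ≤ R := by linarith
  set M : ℝ := A₀ * R ^ dg + 1 with hMdef
  have hM1 : 1 ≤ M := by
    have : 0 ≤ A₀ * R ^ dg := mul_nonneg hA₀0 (pow_nonneg hR0 dg)
    linarith
  have hM0 : 0 < M := by linarith
  obtain ⟨N, hN1, hN2⟩ : ∃ N : ℕ, M * (9/16 : ℝ)^N < ε/2 ∧ dg + 1 ≤ 2 * N := by
    have h1 : Filter.Tendsto (fun N : ℕ => M * (9/16 : ℝ) ^ N) Filter.atTop (nhds 0) := by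
      simpa using (tendsto_pow_atTop_nhds_zero_of_lt_one (by norm_num) (by norm_num)).const_mul M
    have h2 : ∀ᶠ N : ℕ in Filter.atTop, M * (9/16 : ℝ)^N < ε/2 :=
      h1.eventually (gt_mem_nhds (by linarith))
    have h3 : ∀ᶠ N : ℕ in Filter.atTop, dg + 1 ≤ 2 * N :=
      Filter.eventually_atTop.mpr ⟨dg + 1, fun N hN => by omega⟩
    exact (h2.and h3).exists
  set f : MvPolynomial (Fin n) ℝ :=
    p + MvPolynomial.C M * (MvPolynomial.C (4⁻¹:ℝ) * ∑ i : Fin n, MvPolynomial.X i ^ 2) ^ N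
    with hfdef
  have hfx : ∀ x : EuclideanSpace ℝ (Fin n),
      pev f x = pev p x + M * (4⁻¹ * ‖x‖^2)^N := by
    intro x
    rw [← sum_sq_eq x]
    simp only [hfdef, pev, map_add, map_mul, map_pow, map_sum, MvPolynomial.eval_C,
      MvPolynomial.eval_X]
  have hT0 : ∀ x : EuclideanSpace ℝ (Fin n), 0 ≤ (4⁻¹ * ‖x‖^2)^N := by
    intro x; positivity
  have hball : ∀ x : EuclideanSpace ℝ (Fin n), ‖x‖ ≤ 1 → M * (4⁻¹ * ‖x‖^2)^N < ε/2 := by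
    intro x hx
    have h1 : 4⁻¹ * ‖x‖^2 ≤ 9/16 := by nlinarith [norm_nonneg x]
    have h2 : (4⁻¹ * ‖x‖^2)^N ≤ (9/16:ℝ)^N :=
      pow_le_pow_left₀ (by positivity) h1 N
    calc M * (4⁻¹ * ‖x‖^2)^N ≤ M * (9/16:ℝ)^N := mul_le_mul_of_nonneg_left h2 (le_of_lt hM0)
      _ < ε/2 := hN1
  have hdistlb : ∀ x : EuclideanSpace ℝ (Fin n), 1 < ‖x‖ → 3/4 ≤ Metric.infDist x K := by
    intro x hx
    obtain ⟨y, hyK, hxy⟩ := hK.exists_infDist_eq_dist hKne x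
    have hy : ‖y‖ < 1/4 := mem_ball_zero_iff.mp (hKsub hyK)
    rw [hxy, dist_eq_norm]
    have := norm_sub_norm_le x y
    linarith
  have hmid : ∀ x : EuclideanSpace ℝ (Fin n), 1 < ‖x‖ → ‖x‖ ≤ 2 → 0 < pev f x := by
    intro x hx1 hx2
    have h1 := abs_lt.mp (hlow x hx2)
    have h2 := hdistlb x hx1
    have h3 : 3/4 ≤ min (Metric.infDist x K) 1 := le_min h2 (by norm_num)
    have h4 : 0 ≤ M * (4⁻¹ * ‖x‖^2)^N := mul_nonneg (le_of_lt hM0) (hT0 x)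
    rw [hfx]
    linarith [h1.1]
  have hfar : ∀ x : EuclideanSpace ℝ (Fin n), 2 < ‖x‖ → 0 < pev f x := by
    intro x hx
    have hx1 : 1 ≤ ‖x‖ := by linarith
    have hx12 : 1 ≤ ‖x‖/2 := by linarith
    have hg := pev_growth p x hx1
    rw [← hA₀, ← hdg] at hg
    have hTeq : (4⁻¹ * ‖x‖^2)^N = (‖x‖/2)^(2*N) := by
      rw [pow_mul]; congr 1; ring
    have h2N : (‖x‖/2)^(dg+1) ≤ (‖x‖/2)^(2*N) := pow_le_pow_right₀ hx12 hN2
    have hkey : A₀ * ‖x‖^dg < M * (‖x‖/2)^(dg+1) := by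
      rcases le_or_gt ‖x‖ R with h | h
      · have h1' : A₀ * ‖x‖^dg ≤ A₀ * R^dg :=
          mul_le_mul_of_nonneg_left (pow_le_pow_left₀ (norm_nonneg x) h dg) hA₀0
        have h2' : (1:ℝ) ≤ (‖x‖/2)^(dg+1) := one_le_pow₀ hx12
        nlinarith
      · have hxR : A₀ * 2^(dg+1) < ‖x‖ := lt_of_le_of_lt (le_max_right _ _) h
        have hxd : (0:ℝ) < ‖x‖^dg := pow_pos (by linarith) dg
        have hpow : (‖x‖/2)^(dg+1) = ‖x‖^dg * (‖x‖ / 2^(dg+1)) := by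
          rw [div_pow, pow_succ]; ring
        have hA : A₀ < ‖x‖ / 2^(dg+1) := (lt_div_iff₀ (by positivity)).mpr (by linarith)
        have : A₀ * ‖x‖^dg < ‖x‖^dg * (‖x‖ / 2^(dg+1)) := by
          rw [mul_comm A₀]
          exact mul_lt_mul_of_pos_left hA hxd
        have hTnn : (0:ℝ) ≤ (‖x‖/2)^(dg+1) := by positivity
        nlinarith
    have hmono : M * (‖x‖/2)^(dg+1) ≤ M * (‖x‖/2)^(2*N) :=
      mul_le_mul_of_nonneg_left h2N (le_of_lt hM0)
    rw [hfx, hTeq]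
    have := abs_le.mp (le_of_lt (lt_of_le_of_lt hg (lt_of_lt_of_le hkey (le_of_eq rfl))))
    -- simpler: use abs bound directly
    have hb : -(A₀ * ‖x‖^dg) ≤ pev p x := neg_le_of_abs_le hg
    linarith
  refine ⟨f, ?_, ?_, ?_⟩
  · intro x hxK
    have hx14 : ‖x‖ < 1/4 := mem_ball_zero_iff.mp (hKsub hxK)
    have h1 := hlow x (by linarith)
    rw [infDist_zero_of_mem hxK] at h1
    have hmin : min (0:ℝ) 1 = 0 := by norm_num
    rw [hmin] at h1
    have h1' := abs_lt.mp h1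
    have h2 := hball x (by linarith)
    rw [hfx]
    linarith [h1'.2]
  · intro x hfx0
    rcases le_or_gt ‖x‖ 1 with hx | hx
    · have h1 := abs_lt.mp (hlow x (by linarith))
      have h4 : 0 ≤ M * (4⁻¹ * ‖x‖^2)^N := mul_nonneg (le_of_lt hM0) (hT0 x)
      have hppos : pev p x ≤ 0 := by
        have := hfx x
        linarith
      have hmin : min (Metric.infDist x K) 1 < 3*ε/2 := by linarith [h1.2]
      have : Metric.infDist x K < 3*ε/2 := by
        rcases min_lt_iff.mp hmin with h | h
        · exact h
        · exfalso; linarith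
      linarith
    · rcases le_or_gt ‖x‖ 2 with hx2 | hx2
      · exact absurd hfx0 (not_le.mpr (hmid x hx hx2))
      · exact absurd hfx0 (not_le.mpr (hfar x hx2))
  · intro x hx
    rcases le_or_gt ‖x‖ 2 with hx2 | hx2
    · exact hmid x hx hx2
    · exact hfar x hx2

end
end
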